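/- arXiv:math/0604229 — 7 statements merged into one kernel-verified Lean document; each statement's English description precedes it below -/
import Mathlib

section
/- Let P: ℂ → ℂ^{n×n} be a matrix polynomial that is invertible at every point of an open set U ⊆ ℂ. Then the function λ ↦ s_n(λ)⁻¹, where s_n(λ) denotes the smallest singular value of the matrix P(λ), is subharmonic on U. -/
open Matrix Finset

/-- The singular values of a complex `N × N` matrix, arranged in decreasing order:
`svals A 0 ≥ svals A 1 ≥ ... ≥ svals A (N-1)`; that is, `svals A ⟨j-1,_⟩` is the
paper's `s_j(A)`, the nonnegative square roots of the eigenvalues of `Aᴴ * A`. -/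
noncomputable def svals {N : ℕ} (A : Matrix (Fin N) (Fin N) ℂ) : Fin N → ℝ :=
  fun i =>
    Real.sqrt ((Matrix.isHermitian_conjTranspose_mul_self A).eigenvalues
      (Tuple.sort ((Matrix.isHermitian_conjTranspose_mul_self A).eigenvalues) i.rev))

/-- The smallest singular value `s_n(A)` of a complex `(N+1) × (N+1)` matrix. -/
noncomputable def sMin {N : ℕ} (A : Matrix (Fin (N + 1)) (Fin (N + 1)) ℂ) : ℝ :=
  svals A (Fin.last N)

/-- The spectral norm of a matrix: the operator norm induced by the Euclidean vector norm. -/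
noncomputable def specNorm {N : ℕ} (A : Matrix (Fin N) (Fin N) ℂ) : ℝ :=
  ‖Matrix.toEuclideanCLM (𝕜 := ℂ) A‖

/-- Euclidean norm of a vector in `ℂ^N`. -/
noncomputable def enorm' {N : ℕ} (x : Fin N → ℂ) : ℝ :=
  ‖(WithLp.equiv 2 (Fin N → ℂ)).symm x‖

/-- Evaluation of the matrix polynomial `P(z) = Σ_{j=0}^m P_j z^j`. -/
noncomputable def polyEval {N m : ℕ} (P : Fin (m + 1) → Matrix (Fin N) (Fin N) ℂ) (z : ℂ) :
    Matrix (Fin N) (Fin N) ℂ :=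
  ∑ j : Fin (m + 1), z ^ (j : ℕ) • P j

/-- Evaluation of the derivative `P'(z) = Σ_{j=1}^m j P_j z^{j-1}`. -/
noncomputable def polyDerivEval {N m : ℕ} (P : Fin (m + 1) → Matrix (Fin N) (Fin N) ℂ)
    (z : ℂ) : Matrix (Fin N) (Fin N) ℂ :=
  ∑ j : Fin (m + 1), (((j : ℕ) : ℂ) * z ^ ((j : ℕ) - 1)) • P j

/-- Evaluation of the weight polynomial `w(x) = Σ_{j=0}^m w_j x^j`. -/
noncomputable def wEval {m : ℕ} (w : Fin (m + 1) → ℝ) (x : ℝ) : ℝ :=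
  ∑ j : Fin (m + 1), w j * x ^ (j : ℕ)
/-- A continuous function `φ` on an open set `U ⊆ ℂ` is subharmonic if it satisfies the
sub-mean value inequality on every closed disc contained in `U`. -/
def SubharmonicOn (φ : ℂ → ℝ) (U : Set ℂ) : Prop :=
  ContinuousOn φ U ∧
    ∀ lam0 : ℂ, ∀ r : ℝ, 0 < r → Metric.closedBall lam0 r ⊆ U →
      φ lam0 ≤ (1 / (2 * Real.pi)) *
        ∫ θ in (0 : ℝ)..(2 * Real.pi), φ (lam0 + (r : ℂ) * Complex.exp (θ * Complex.I))


section AuxLemmas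

open Matrix Finset Metric
open scoped Matrix.Norms.L2Operator

private lemma norm_diag_max {N : ℕ} (v : Fin N → ℂ) (i0 : Fin N) (hmax : ∀ i, ‖v i‖ ≤ ‖v i0‖) :
    ‖toEuclideanCLM (𝕜 := ℂ) (diagonal v)‖ = ‖v i0‖ := by
  have happ : ∀ (x : EuclideanSpace ℂ (Fin N)) (i : Fin N),
      (toEuclideanCLM (𝕜 := ℂ) (diagonal v) x) i = v i * x i := by
    intro x i
    show (diagonal v *ᵥ (x : Fin N → ℂ)) i = _
    rw [mulVec_diagonal]
  refine le_antisymm (ContinuousLinearMap.opNorm_le_bound _ (norm_nonneg _) fun x => ?_) ?_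
  · rw [EuclideanSpace.norm_eq, EuclideanSpace.norm_eq]
    rw [← Real.sqrt_sq (norm_nonneg (v i0)), ← Real.sqrt_mul (sq_nonneg _)]
    apply Real.sqrt_le_sqrt
    rw [Finset.mul_sum]
    apply Finset.sum_le_sum
    intro i _
    rw [happ, norm_mul, mul_pow]
    gcongr
    exact hmax i
  · have h1 : ‖(EuclideanSpace.single i0 (1:ℂ) : EuclideanSpace ℂ (Fin N))‖ = 1 := by
      simp [EuclideanSpace.norm_single]
    calc ‖v i0‖ = ‖toEuclideanCLM (𝕜 := ℂ) (diagonal v) (EuclideanSpace.single i0 1)‖ := by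
          rw [EuclideanSpace.norm_eq]
          rw [show (∑ i, ‖(toEuclideanCLM (𝕜 := ℂ) (diagonal v) (EuclideanSpace.single i0 1)) i‖ ^ 2)
              = ∑ i, ‖v i‖^2 * ‖(EuclideanSpace.single i0 (1:ℂ) : EuclideanSpace ℂ (Fin N)) i‖ ^ 2 by
            refine Finset.sum_congr rfl fun i _ => ?_
            rw [happ, norm_mul, mul_pow]]
          rw [Finset.sum_eq_single i0 (fun b _ hb => by simp [EuclideanSpace.single_apply, hb])
            (by simp)]
          simp [EuclideanSpace.single_apply, Real.sqrt_sq (norm_nonneg _)]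
      _ ≤ ‖toEuclideanCLM (𝕜 := ℂ) (diagonal v)‖ * ‖(EuclideanSpace.single i0 (1:ℂ) : EuclideanSpace ℂ (Fin N))‖ :=
          ContinuousLinearMap.le_opNorm _ _
      _ = ‖toEuclideanCLM (𝕜 := ℂ) (diagonal v)‖ := by rw [h1, mul_one]

private lemma sMin_inv_eq {N : ℕ} (A : Matrix (Fin (N + 1)) (Fin (N + 1)) ℂ) (h : IsUnit A.det) :
    (sMin A)⁻¹ = ‖toEuclideanCLM (𝕜 := ℂ) A⁻¹‖ := by
  set hB := Matrix.isHermitian_conjTranspose_mul_self A with hBdef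
  set μ := hB.eigenvalues with hμ
  have hpos : ∀ i, 0 < μ i := by
    have hnn : ∀ i, 0 ≤ μ i := fun i =>
      Matrix.eigenvalues_conjTranspose_mul_self_nonneg A i
    have hdet : (Aᴴ * A).det ≠ 0 := by
      rw [Matrix.det_mul, Matrix.det_conjTranspose]
      exact mul_ne_zero (star_ne_zero.2 h.ne_zero) h.ne_zero
    intro i
    rcases (hnn i).lt_or_eq with h' | h'
    · exact h'
    · exact absurd (hB.det_eq_prod_eigenvalues.trans <|
        Finset.prod_eq_zero (Finset.mem_univ i) (by rw [← hμ, ← h']; norm_num)) hdet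
  set i0 := Tuple.sort μ ((Fin.last N).rev) with hi0
  have hsMin : sMin A = Real.sqrt (μ i0) := rfl
  have hmin : ∀ i, μ i0 ≤ μ i := by
    intro i
    have hieq : i = Tuple.sort μ ((Tuple.sort μ)⁻¹ i) := (Equiv.apply_symm_apply _ _).symm
    rw [hieq, hi0, Fin.rev_last]
    exact Tuple.monotone_sort μ (Fin.zero_le _)
  set U : Matrix.unitaryGroup (Fin (N+1)) ℂ := hB.eigenvectorUnitary with hU
  set D' : Matrix (Fin (N+1)) (Fin (N+1)) ℂ := diagonal (fun i => ((μ i : ℂ))⁻¹) with hD'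
  have h1 : star (U : Matrix (Fin (N+1)) (Fin (N+1)) ℂ) * (U : Matrix (Fin (N+1)) (Fin (N+1)) ℂ) = 1 :=
    Unitary.coe_star_mul_self U
  have h2 : (U : Matrix (Fin (N+1)) (Fin (N+1)) ℂ) * star (U : Matrix (Fin (N+1)) (Fin (N+1)) ℂ) = 1 :=
    Unitary.coe_mul_star_self U
  have h1' : ∀ X : Matrix (Fin (N+1)) (Fin (N+1)) ℂ,
      star (U : Matrix (Fin (N+1)) (Fin (N+1)) ℂ) * ((U : Matrix (Fin (N+1)) (Fin (N+1)) ℂ) * X) = X := by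
    intro X; rw [← mul_assoc, h1, one_mul]
  have hDD : diagonal (RCLike.ofReal ∘ μ) * D' = 1 := by
    rw [hD', Matrix.diagonal_mul_diagonal]
    have hfun : (fun i => (RCLike.ofReal ∘ μ) i * ((μ i : ℂ))⁻¹) = fun _ => (1:ℂ) := by
      funext i
      show (μ i : ℂ) * (μ i : ℂ)⁻¹ = 1
      exact mul_inv_cancel₀ (by exact_mod_cast (hpos i).ne')
    rw [hfun, Matrix.diagonal_one]
  have hBinv : (Aᴴ * A)⁻¹ = (U : Matrix (Fin (N+1)) (Fin (N+1)) ℂ) * D' * star (U : Matrix (Fin (N+1)) (Fin (N+1)) ℂ) := by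
    apply Matrix.inv_eq_right_inv
    conv_lhs => rw [hB.spectral_theorem, Unitary.conjStarAlgAut_apply]
    simp only [mul_assoc]
    rw [h1', ← mul_assoc (diagonal (RCLike.ofReal ∘ hB.eigenvalues)) D', hDD, one_mul, h2]
  have hnormB : ‖(Aᴴ * A)⁻¹‖ = ‖D'‖ := by
    rw [hBinv, mul_assoc, CStarRing.norm_mem_unitary_mul _ U.2,
      CStarRing.norm_mul_mem_unitary _ (Unitary.star_mem U.2)]
  have hD'norm : ‖D'‖ = (μ i0)⁻¹ := by
    rw [Matrix.cstar_norm_def, hD', norm_diag_max _ i0]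
    · rw [norm_inv, Complex.norm_real, Real.norm_of_nonneg (hpos i0).le]
    · intro i
      rw [norm_inv, norm_inv, Complex.norm_real, Complex.norm_real,
        Real.norm_of_nonneg (hpos i).le, Real.norm_of_nonneg (hpos i0).le]
      exact inv_anti₀ (hpos i0) (hmin i)
  have e1 : (Aᴴ * A)⁻¹ = ((A⁻¹)ᴴ)ᴴ * (A⁻¹)ᴴ := by
    rw [Matrix.mul_inv_rev, Matrix.conjTranspose_conjTranspose, Matrix.conjTranspose_nonsing_inv]
  have hnormB2 : ‖(Aᴴ * A)⁻¹‖ = ‖A⁻¹‖ * ‖A⁻¹‖ := by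
    rw [e1, Matrix.l2_opNorm_conjTranspose_mul_self, Matrix.l2_opNorm_conjTranspose]
  have hfin : ‖A⁻¹‖ * ‖A⁻¹‖ = (μ i0)⁻¹ := by rw [← hnormB2, hnormB, hD'norm]
  rw [← Matrix.cstar_norm_def]
  calc (sMin A)⁻¹ = (Real.sqrt (μ i0))⁻¹ := by rw [hsMin]
    _ = Real.sqrt ((μ i0)⁻¹) := (Real.sqrt_inv _).symm
    _ = Real.sqrt (‖A⁻¹‖ * ‖A⁻¹‖) := by rw [hfin]
    _ = ‖A⁻¹‖ := Real.sqrt_mul_self (norm_nonneg _)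

private lemma norm_le_circle_average {E : Type*} [NormedAddCommGroup E] [NormedSpace ℂ E]
    [CompleteSpace E] {f : ℂ → E} {V : Set ℂ}
    (hf : DifferentiableOn ℂ f V) {c : ℂ} {r : ℝ} (hr : 0 < r)
    (hsub : closedBall c r ⊆ V) :
    ‖f c‖ ≤ (1 / (2 * Real.pi)) * ∫ θ in (0:ℝ)..(2 * Real.pi), ‖f (c + (r:ℂ) * Complex.exp (θ * Complex.I))‖ := by
  have hds : DiffContOnCl ℂ f (ball c r) := by
    apply DifferentiableOn.diffContOnCl
    rw [closure_ball c hr.ne']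
    exact hf.mono hsub
  have hkey := hds.circleIntegral_sub_inv_smul (w := c) (mem_ball_self hr)
  rw [circleIntegral] at hkey
  have hint : ∀ θ : ℝ, deriv (circleMap c r) θ •
      (circleMap c r θ - c)⁻¹ • f (circleMap c r θ) = Complex.I • f (circleMap c r θ) := by
    intro θ
    rw [deriv_circleMap, circleMap_sub_center, smul_smul]
    congr 1
    rw [mul_comm, ← mul_assoc, inv_mul_cancel₀ (circleMap_ne_center hr.ne' (θ := θ)), one_mul]
  simp only [hint] at hkey
  rw [intervalIntegral.integral_smul] at hkey
  have hI : (∫ θ in (0:ℝ)..(2 * Real.pi), f (circleMap c r θ)) = (((2 * Real.pi : ℝ)) : ℂ) • f c := by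
    have h := congrArg (fun x => (Complex.I)⁻¹ • x) hkey
    simp only [inv_smul_smul₀ Complex.I_ne_zero] at h
    rw [h, smul_smul]
    congr 1
    have : Complex.I⁻¹ * (2 * ↑Real.pi * Complex.I) = 2 * ↑Real.pi * (Complex.I⁻¹ * Complex.I) := by ring
    rw [this, inv_mul_cancel₀ Complex.I_ne_zero, mul_one]
    push_cast
    ring
  have hnorm : (2 * Real.pi) * ‖f c‖ = ‖∫ θ in (0:ℝ)..(2 * Real.pi), f (circleMap c r θ)‖ := by
    rw [hI, norm_smul, Complex.norm_real, Real.norm_of_nonneg (by positivity)]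
  have hle := intervalIntegral.norm_integral_le_integral_norm
    (f := fun θ : ℝ => f (circleMap c r θ)) (a := 0) (b := 2 * Real.pi)
    (μ := MeasureTheory.volume) (by positivity)
  have h2pi : (0:ℝ) < 2 * Real.pi := by positivity
  rw [div_mul_eq_mul_div, le_div_iff₀ h2pi, one_mul]
  calc ‖f c‖ * (2 * Real.pi) = (2 * Real.pi) * ‖f c‖ := mul_comm _ _
    _ = ‖∫ θ in (0:ℝ)..(2 * Real.pi), f (circleMap c r θ)‖ := hnorm
    _ ≤ ∫ θ in (0:ℝ)..(2 * Real.pi), ‖f (circleMap c r θ)‖ := hle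
    _ = ∫ θ in (0:ℝ)..(2 * Real.pi), ‖f (c + (r:ℂ) * Complex.exp (θ * Complex.I))‖ := rfl

variable {n m : ℕ} (P : Fin (m + 1) → Matrix (Fin (n + 1)) (Fin (n + 1)) ℂ)

private noncomputable def Fc : ℂ → (EuclideanSpace ℂ (Fin (n+1)) →L[ℂ] EuclideanSpace ℂ (Fin (n+1))) :=
  fun z => toEuclideanCLM (𝕜 := ℂ) (polyEval P z)

private lemma Fc_diff : Differentiable ℂ (Fc P) := by
  have h : Fc P = fun z => ∑ j : Fin (m+1), z ^ (j : ℕ) • toEuclideanCLM (𝕜 := ℂ) (P j) := by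
    funext z
    simp [Fc, polyEval, map_sum, _root_.map_smul]
  rw [h]
  exact Differentiable.fun_sum fun j _ => (differentiable_pow _).smul_const _

private lemma Fc_isUnit {z : ℂ} (h : IsUnit (polyEval P z).det) : IsUnit (Fc P z) := by
  refine ⟨⟨Fc P z, toEuclideanCLM (𝕜 := ℂ) (polyEval P z)⁻¹, ?_, ?_⟩, rfl⟩
  · rw [Fc, ← _root_.map_mul, Matrix.mul_nonsing_inv _ h, _root_.map_one]
  · rw [Fc, ← _root_.map_mul, Matrix.nonsing_inv_mul _ h, _root_.map_one]

private lemma Fc_ringInverse {z : ℂ} (h : IsUnit (polyEval P z).det) :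
    Ring.inverse (Fc P z) = toEuclideanCLM (𝕜 := ℂ) (polyEval P z)⁻¹ := by
  set u : (EuclideanSpace ℂ (Fin (n+1)) →L[ℂ] EuclideanSpace ℂ (Fin (n+1)))ˣ :=
    ⟨Fc P z, toEuclideanCLM (𝕜 := ℂ) (polyEval P z)⁻¹,
      by rw [Fc, ← _root_.map_mul, Matrix.mul_nonsing_inv _ h, _root_.map_one],
      by rw [Fc, ← _root_.map_mul, Matrix.nonsing_inv_mul _ h, _root_.map_one]⟩ with hu
  have : Fc P z = (u : _) := rfl
  rw [this, Ring.inverse_unit]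
  rfl

end AuxLemmas

/-- If the matrix polynomial `P` is invertible at every point of an open
set `U`, then `λ ↦ s_n(λ)⁻¹` is subharmonic on `U`. -/
theorem stmt3 {n m : ℕ} (P : Fin (m + 1) → Matrix (Fin (n + 1)) (Fin (n + 1)) ℂ)
    (U : Set ℂ) (hU : IsOpen U) (hinv : ∀ lam ∈ U, IsUnit (polyEval P lam).det) :
    SubharmonicOn (fun lam => (sMin (polyEval P lam))⁻¹) U := by
  classical
  set g : ℂ → (EuclideanSpace ℂ (Fin (n+1)) →L[ℂ] EuclideanSpace ℂ (Fin (n+1))) :=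
    fun z => Ring.inverse (Fc P z) with hg
  have hgdiff : DifferentiableOn ℂ g U := fun z hz =>
    ((Fc_diff P z).inverse (Fc_isUnit P (hinv z hz))).differentiableWithinAt
  have hgnorm : ∀ z ∈ U, (sMin (polyEval P z))⁻¹ = ‖g z‖ := by
    intro z hz
    rw [hg]
    simp only
    rw [Fc_ringInverse P (hinv z hz)]
    exact sMin_inv_eq _ (hinv z hz)
  constructor
  · exact (hgdiff.continuousOn.norm).congr fun z hz => hgnorm z hz
  · intro lam0 r hr hsub
    have h1 := norm_le_circle_average hgdiff hr hsub
    rw [show (fun lam => (sMin (polyEval P lam))⁻¹) lam0 = ‖g lam0‖ from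
      hgnorm lam0 (hsub (Metric.mem_closedBall_self hr.le))]
    refine h1.trans (le_of_eq ?_)
    congr 1
    apply intervalIntegral.integral_congr
    intro θ _
    have hmem : lam0 + (r:ℂ) * Complex.exp (θ * Complex.I) ∈ U := by
      apply hsub
      rw [Metric.mem_closedBall, dist_eq_norm, add_sub_cancel_left, norm_mul,
        Complex.norm_real, Real.norm_of_nonneg hr.le]
      rw [show ‖Complex.exp (θ * Complex.I)‖ = 1 from by
        rw [Complex.norm_exp_ofReal_mul_I]]
      rw [mul_one]
    exact (hgnorm _ hmem).symm
end

section
/- Suppose A and E are n×n complex matrices such that det A ≠ 0 and det(A+E) ≠ 0. Then there is a continuous map t ↦ E(t) ∈ ℂ^{n×n}, t ∈ [0,1], such that E(0) = 0, E(1) = E, and for all t ∈ [0,1], det(A + E(t)) ≠ 0 and ‖E(t)‖ ≤ ‖E‖. -/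
open Matrix Finset

set_option synthInstance.maxHeartbeats 1000000 in
lemma mySpecNorm_smul {N : ℕ} (a : ℂ) (M : Matrix (Fin N) (Fin N) ℂ) :
    specNorm (a • M) = ‖a‖ * specNorm M := by
  unfold specNorm
  rw [_root_.map_smul]
  exact norm_smul a (Matrix.toEuclideanCLM (𝕜 := ℂ) M)

/-- If `det A ≠ 0` and `det (A+E) ≠ 0`, there is a continuous path
`E(t)` from `0` to `E` along which `A + E(t)` stays nonsingular and `‖E(t)‖ ≤ ‖E‖`. -/
theorem stmt5 {n : ℕ} (A E : Matrix (Fin n) (Fin n) ℂ)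
    (hA : A.det ≠ 0) (hAE : (A + E).det ≠ 0) :
    ∃ f : ℝ → Matrix (Fin n) (Fin n) ℂ,
      ContinuousOn f (Set.Icc 0 1) ∧ f 0 = 0 ∧ f 1 = E ∧
        ∀ t ∈ Set.Icc (0 : ℝ) 1, (A + f t).det ≠ 0 ∧ specNorm (f t) ≤ specNorm E := by
  classical
  set c : ℝ → ℝ → ℂ := fun s t => (t : ℂ) + ((s * t * (1 - t) : ℝ) : ℂ) * Complex.I with hc
  set P : Polynomial ℂ :=
    (A.map Polynomial.C + (Polynomial.X : Polynomial ℂ) • E.map Polynomial.C).det with hP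
  have hPeval : ∀ z : ℂ, P.eval z = (A + z • E).det := by
    intro z
    have h1 := RingHom.map_det (Polynomial.evalRingHom z)
      (A.map Polynomial.C + (Polynomial.X : Polynomial ℂ) • E.map Polynomial.C)
    have h2 : (A.map Polynomial.C + (Polynomial.X : Polynomial ℂ) • E.map Polynomial.C).map
        (Polynomial.eval z) = A + z • E := by
      ext i j
      simp [Matrix.map_apply, Matrix.add_apply, Matrix.smul_apply, smul_eq_mul]
      ring
    rw [hP]
    simpa [h2] using h1
  have hP0 : P.eval 0 ≠ 0 := by rw [hPeval]; simpa using hA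
  have hP1 : P.eval 1 ≠ 0 := by rw [hPeval]; simpa using hAE
  have hPne : P ≠ 0 := by intro h; exact hP0 (by rw [h, Polynomial.eval_zero])
  have hre : ∀ s t : ℝ, (c s t).re = t := by intro s t; simp [hc]
  have him : ∀ s t : ℝ, (c s t).im = s * t * (1 - t) := by intro s t; simp [hc]
  set bad : Set ℝ := {s : ℝ | ∃ t ∈ Set.Icc (0:ℝ) 1, P.eval (c s t) = 0} with hbad
  have hbadfin : bad.Finite := by
    have hsub : bad ⊆ ⋃ z ∈ (P.roots.toFinset : Set ℂ),
        {s : ℝ | ∃ t ∈ Set.Icc (0:ℝ) 1, c s t = z} := by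
      rintro s ⟨t, ht, hz⟩
      refine Set.mem_biUnion ?_ ⟨t, ht, rfl⟩
      rw [Finset.mem_coe, Multiset.mem_toFinset, Polynomial.mem_roots hPne]
      exact hz
    refine Set.Finite.subset (Set.Finite.biUnion (P.roots.toFinset.finite_toSet) ?_) hsub
    intro z hz
    have hzroot : P.eval z = 0 := by
      simpa [Polynomial.mem_roots, hPne, Polynomial.IsRoot.def] using hz
    -- each such set is a subsingleton
    refine Set.Subsingleton.finite ?_
    rintro s₁ ⟨t₁, ht₁, he₁⟩ s₂ ⟨t₂, ht₂, he₂⟩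
    have hre1 : t₁ = z.re := by rw [← he₁, hre]
    have hre2 : t₂ = z.re := by rw [← he₂, hre]
    have htt : t₁ = t₂ := hre1.trans hre2.symm
    have him1 : s₁ * t₁ * (1 - t₁) = z.im := by rw [← he₁, him]
    have him2 : s₂ * t₁ * (1 - t₁) = z.im := by rw [htt, ← he₂, him]
    have ht10 : t₁ ≠ 0 := by
      intro h
      apply hP0
      have hz0 : z = 0 := by rw [← he₁, h]; simp [hc]
      rw [hz0] at hzroot; exact hzroot
    have ht11 : t₁ ≠ 1 := by
      intro h
      apply hP1
      have hz0 : z = 1 := by rw [← he₁, h]; simp [hc]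
      rw [hz0] at hzroot; exact hzroot
    have hne : t₁ * (1 - t₁) ≠ 0 :=
      mul_ne_zero ht10 (sub_ne_zero.mpr (Ne.symm ht11))
    have : s₁ * (t₁ * (1 - t₁)) = s₂ * (t₁ * (1 - t₁)) := by
      rw [← mul_assoc, ← mul_assoc, him1, him2]
    exact mul_right_cancel₀ hne this
  obtain ⟨s, hs⟩ : (Set.Icc (0:ℝ) 1 \ bad).Nonempty :=
    ((Set.Icc_infinite (by norm_num : (0:ℝ) < 1)).diff hbadfin).nonempty
  obtain ⟨⟨hs0, hs1⟩, hsbad⟩ := hs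
  refine ⟨fun t => c s t • E, ?_, ?_, ?_, ?_⟩
  · apply Continuous.continuousOn
    refine Continuous.smul (f := fun t => c s t) (g := fun _ => E) ?_ continuous_const
    fun_prop
  · simp [hc]
  · simp [hc]
  · intro t ht
    constructor
    · intro h
      exact hsbad ⟨t, ht, by rw [hPeval]; exact h⟩
    · have hnorm : specNorm (c s t • E) = ‖c s t‖ * specNorm E :=
        mySpecNorm_smul _ _
      rw [hnorm]
      have hle : ‖c s t‖ ≤ 1 := by
        obtain ⟨ht0, ht1⟩ := ht
        have hsq : ‖c s t‖ ^ 2 = t ^ 2 + (s * t * (1 - t)) ^ 2 := by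
          simp only [hc]
          rw [Complex.sq_norm]
          exact Complex.normSq_add_mul_I t (s * t * (1 - t))
        have a1 : t ^ 2 ≤ t := by nlinarith [mul_nonneg ht0 (sub_nonneg.mpr ht1)]
        have hs2 : s ^ 2 ≤ 1 := by nlinarith
        have a2 : (s * t * (1 - t)) ^ 2 ≤ (t * (1 - t)) ^ 2 := by
          calc (s * t * (1 - t)) ^ 2 = s ^ 2 * (t * (1 - t)) ^ 2 := by ring
            _ ≤ 1 * (t * (1 - t)) ^ 2 :=
              mul_le_mul_of_nonneg_right hs2 (sq_nonneg _)
            _ = (t * (1 - t)) ^ 2 := one_mul _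
        have hu : (0:ℝ) ≤ 1 - t := sub_nonneg.mpr ht1
        have ht2 : t ^ 2 ≤ 1 := by nlinarith
        have h4 : t ^ 2 * (1 - t) ≤ 1 := by
          nlinarith [mul_nonneg (mul_nonneg ht0 ht0) ht0]
        have a3 : (t * (1 - t)) ^ 2 ≤ 1 - t := by
          calc (t * (1 - t)) ^ 2 = (t ^ 2 * (1 - t)) * (1 - t) := by ring
            _ ≤ 1 * (1 - t) := mul_le_mul_of_nonneg_right h4 hu
            _ = 1 - t := one_mul _
        nlinarith [norm_nonneg (c s t), hsq]
      have hE : 0 ≤ specNorm E := norm_nonneg _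
      nlinarith
end

section
/- Let P(λ) be an n×n matrix polynomial, and let μ be an eigenvalue of P with left eigenvector u (i.e., u ≠ 0 and u* P(μ) = 0) and right eigenvector v (i.e., v ≠ 0 and P(μ)v = 0). If u* P'(μ) v = 0, where P'(λ) is the derivative of P(λ), then μ is a multiple eigenvalue of P(λ), i.e., μ is a zero of det P(λ) of multiplicity at least 2. -/
open Matrix Finset

lemma aux_sq_dvd (μ : ℂ) (p : Polynomial ℂ) (h0 : p.eval μ = 0)
    (h1 : (Polynomial.derivative p).eval μ = 0) :
    (Polynomial.X - Polynomial.C μ) ^ 2 ∣ p := by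
  obtain ⟨q, hq⟩ := (Polynomial.dvd_iff_isRoot.mpr h0)
  have hq' : (Polynomial.derivative p).eval μ = q.eval μ := by
    rw [hq]; simp [Polynomial.derivative_mul]
  have : (Polynomial.X - Polynomial.C μ) ∣ q :=
    Polynomial.dvd_iff_isRoot.mpr (by rw [Polynomial.IsRoot, ← hq', h1])
  obtain ⟨r, hr⟩ := this
  exact ⟨r, by rw [hq, hr]; ring⟩

lemma aux_det_dvd {n : ℕ} (d : Polynomial ℂ) (N : Matrix (Fin n) (Fin n) (Polynomial ℂ))
    (i0 j0 : Fin n) (hc : ∀ i, d ∣ N i i0) (hr : ∀ j, d ∣ N j0 j)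
    (h0 : d ^ 2 ∣ N j0 i0) : d ^ 2 ∣ N.det := by
  rw [Matrix.det_apply']
  apply Finset.dvd_sum
  intro σ _
  apply Dvd.dvd.mul_left
  by_cases hσ : σ i0 = j0
  · rw [← Finset.mul_prod_erase Finset.univ _ (Finset.mem_univ i0)]
    exact dvd_mul_of_dvd_left (by rwa [hσ]) _
  · have hi1 : (σ⁻¹ j0 : Fin n) ≠ i0 := by
      intro h
      exact hσ (by rw [← h, (show σ (σ⁻¹ j0) = j0 from σ.apply_symm_apply j0)])
    rw [← Finset.mul_prod_erase Finset.univ _ (Finset.mem_univ i0),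
      ← Finset.mul_prod_erase _ _ (Finset.mem_erase.mpr ⟨hi1, Finset.mem_univ _⟩), pow_two]
    have h2 : d ∣ N (σ (σ⁻¹ j0)) (σ⁻¹ j0) := by rw [(show σ (σ⁻¹ j0) = j0 from σ.apply_symm_apply j0)]; exact hr _
    exact mul_dvd_mul (hc _) (dvd_mul_of_dvd_left h2 _)


/-- If `u`, `v` are left and right eigenvectors of the matrix polynomial
`P` at `μ` and `u* P'(μ) v = 0`, then `μ` is a zero of `det P(λ)` of multiplicity ≥ 2. -/
theorem stmt6 {n m : ℕ} (P : Fin (m + 1) → Matrix (Fin n) (Fin n) ℂ) (μ : ℂ)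
    (u v : Fin n → ℂ) (hu : u ≠ 0) (hv : v ≠ 0)
    (hul : Matrix.vecMul (star u) (polyEval P μ) = 0)
    (hvr : (polyEval P μ).mulVec v = 0)
    (horth : dotProduct (star u) ((polyDerivEval P μ).mulVec v) = 0) :
    (Polynomial.X - Polynomial.C μ) ^ 2 ∣
      (∑ j : Fin (m + 1),
        ((Polynomial.X : Polynomial ℂ) ^ (j : ℕ)) • (P j).map Polynomial.C :
          Matrix (Fin n) (Fin n) (Polynomial ℂ)).det := by
    classical
  set M : Matrix (Fin n) (Fin n) (Polynomial ℂ) :=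
    ∑ j : Fin (m + 1), ((Polynomial.X : Polynomial ℂ) ^ (j : ℕ)) • (P j).map Polynomial.C with hM
  set A := polyEval P μ with hA
  set B := polyDerivEval P μ with hB
  set d : Polynomial ℂ := Polynomial.X - Polynomial.C μ with hd
  -- entrywise evaluation facts
  have hMapp : ∀ i j, M i j = ∑ k : Fin (m + 1),
      (Polynomial.X : Polynomial ℂ) ^ (k : ℕ) * Polynomial.C (P k i j) := by
    intro i j
    simp [hM, Matrix.sum_apply, Matrix.smul_apply, smul_eq_mul]
  have hMe : ∀ i j, (M i j).eval μ = A i j := by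
    intro i j
    rw [hMapp]
    simp only [hA, polyEval, Matrix.sum_apply, Polynomial.eval_finset_sum,
      Polynomial.eval_mul, Polynomial.eval_pow, Polynomial.eval_X, Polynomial.eval_C,
      Matrix.smul_apply, smul_eq_mul]
  have hMd : ∀ i j, ((Polynomial.derivative (M i j)).eval μ) = B i j := by
    intro i j
    rw [hMapp]
    rw [Polynomial.derivative_sum]
    simp only [hB, polyDerivEval, Matrix.sum_apply, Polynomial.eval_finset_sum,
      Polynomial.derivative_mul, Polynomial.derivative_X_pow, Polynomial.derivative_C,
      mul_zero, add_zero, Polynomial.eval_mul, Polynomial.eval_pow, Polynomial.eval_X,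
      Polynomial.eval_C, Matrix.smul_apply, smul_eq_mul]
  obtain ⟨i0, hi0⟩ := Function.ne_iff.mp hv
  obtain ⟨j0, hj0⟩ := Function.ne_iff.mp hu
  set M1 : Matrix (Fin n) (Fin n) (Polynomial ℂ) :=
    M.updateCol i0 (fun r => ∑ k, Polynomial.C (v k) • M r k) with hM1
  have hdet1 : M1.det = Polynomial.C (v i0) • M.det :=
    Matrix.det_updateCol_sum M i0 (fun k => Polynomial.C (v k))
  set M2 : Matrix (Fin n) (Fin n) (Polynomial ℂ) :=
    M1.updateRow j0 (∑ k, Polynomial.C (star u k) • M1 k) with hM2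
  have hdet2 : M2.det = Polynomial.C (star u j0) • M1.det :=
    Matrix.det_updateRow_sum M1 j0 (fun k => Polynomial.C (star u k))
  -- corner entry
  have hcorner : M2 j0 i0 = ∑ k, Polynomial.C (star u k) * ∑ l, Polynomial.C (v l) * M k l := by
    simp [hM2, hM1, Matrix.updateRow_self, Finset.sum_apply, Matrix.updateCol_self,
      smul_eq_mul]
  have h00 : d ^ 2 ∣ M2 j0 i0 := by
    rw [hcorner]
    apply aux_sq_dvd
    · have : (∑ k, Polynomial.C (star u k) * ∑ l, Polynomial.C (v l) * M k l).eval μ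
          = dotProduct (star u) (A.mulVec v) := by
        simp [Polynomial.eval_finset_sum, dotProduct, Matrix.mulVec, hMe, mul_comm]
      rw [this, hvr]
      simp [dotProduct]
    · have : (Polynomial.derivative
            (∑ k, Polynomial.C (star u k) * ∑ l, Polynomial.C (v l) * M k l)).eval μ
          = dotProduct (star u) (B.mulVec v) := by
        rw [Polynomial.derivative_sum]
        simp [Polynomial.derivative_mul, Polynomial.derivative_sum,
          Polynomial.eval_finset_sum, dotProduct, Matrix.mulVec, hMd, mul_comm]
      rw [this]
      exact horth
  have hcol : ∀ i, d ∣ M2 i i0 := by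
    intro i
    by_cases hij : i = j0
    · subst hij
      exact (dvd_pow_self d (two_ne_zero)).trans h00
    · have hent : M2 i i0 = ∑ k, Polynomial.C (v k) * M i k := by
        simp [hM2, hM1, Matrix.updateRow_ne hij, Matrix.updateCol_self, smul_eq_mul]
      rw [hent]
      apply Polynomial.dvd_iff_isRoot.mpr
      have : (∑ k, Polynomial.C (v k) * M i k).eval μ = (A.mulVec v) i := by
        simp [Polynomial.eval_finset_sum, Matrix.mulVec, dotProduct, hMe, mul_comm]
      rw [Polynomial.IsRoot, this, hvr]
      simp
  have hrow : ∀ j, d ∣ M2 j0 j := by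
    intro j
    by_cases hji : j = i0
    · subst hji
      exact (dvd_pow_self d (two_ne_zero)).trans h00
    · have hent : M2 j0 j = ∑ k, Polynomial.C (star u k) * M k j := by
        simp [hM2, hM1, Matrix.updateRow_self, Finset.sum_apply,
          Matrix.updateCol_ne hji, smul_eq_mul]
      rw [hent]
      apply Polynomial.dvd_iff_isRoot.mpr
      have : (∑ k, Polynomial.C (star u k) * M k j).eval μ = (Matrix.vecMul (star u) A) j := by
        simp [Polynomial.eval_finset_sum, Matrix.vecMul, dotProduct, hMe]
      rw [Polynomial.IsRoot, this, hul]
      simp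
  have hfin : d ^ 2 ∣ M2.det := aux_det_dvd d M2 i0 j0 hcol hrow h00
  rw [hdet2, hdet1, smul_eq_mul, smul_eq_mul] at hfin
  have hj0' : u j0 ≠ 0 := by simpa using hj0
  have hi0' : v i0 ≠ 0 := by simpa using hi0
  have hu1 : IsUnit (Polynomial.C (star u j0)) := by
    apply Polynomial.isUnit_C.mpr
    apply Ne.isUnit
    simpa using hj0'
  have hv1 : IsUnit (Polynomial.C (v i0)) :=
    Polynomial.isUnit_C.mpr hi0'.isUnit
  rw [hu1.dvd_mul_left, hv1.dvd_mul_left] at hfin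
  exact hfin
end

section
/- The Tisseur–Higham characterisation of pseudospectra: for an n×n matrix polynomial P(λ), weight function w, and ε ≥ 0, a point μ ∈ ℂ satisfies s_n(μ) ≤ ε w(|μ|) (where s_n(μ) is the smallest singular value of the matrix P(μ)) if and only if there exist matrices Δ_0, ..., Δ_m with ‖Δ_j‖ ≤ ε w_j for every j such that det(Σ_{j=0}^m (P_j + Δ_j) μ^j) = 0. -/
open Matrix Finset
open scoped InnerProductSpace ComplexConjugate

section Aux

variable {N : ℕ}

lemma sort_zero_le (f : Fin (N + 1) → ℝ) (i : Fin (N + 1)) :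
    f (Tuple.sort f 0) ≤ f i := by
  have h := Tuple.monotone_sort f (Fin.zero_le ((Tuple.sort f).symm i))
  simpa using h

lemma clm_eig (A : Matrix (Fin (N + 1)) (Fin (N + 1)) ℂ) (i : Fin (N + 1)) :
    toEuclideanCLM (𝕜 := ℂ) (Aᴴ * A) ((isHermitian_conjTranspose_mul_self A).eigenvectorBasis i)
      = (((isHermitian_conjTranspose_mul_self A).eigenvalues i : ℂ)) •
        (isHermitian_conjTranspose_mul_self A).eigenvectorBasis i := by
  have h := (isHermitian_conjTranspose_mul_self A).mulVec_eigenvectorBasis i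
  apply (WithLp.equiv 2 (Fin (N + 1) → ℂ)).injective
  rw [WithLp.equiv_apply, ofLp_toEuclideanCLM]
  simpa [Matrix.toLin'_apply] using h

lemma norm_clm_sq (A : Matrix (Fin (N + 1)) (Fin (N + 1)) ℂ)
    (x : EuclideanSpace ℂ (Fin (N + 1))) :
    ‖toEuclideanCLM (𝕜 := ℂ) A x‖ ^ 2
      = ∑ i, (isHermitian_conjTranspose_mul_self A).eigenvalues i *
          ‖⟪(isHermitian_conjTranspose_mul_self A).eigenvectorBasis i, x⟫_ℂ‖ ^ 2 := by
  set hB := isHermitian_conjTranspose_mul_self A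
  set T := toEuclideanCLM (𝕜 := ℂ) (Aᴴ * A) with hTdef
  have hT : ContinuousLinearMap.adjoint T = T := by
    rw [hTdef, ← ContinuousLinearMap.star_eq_adjoint, ← map_star]
    congr 1
  have h1 : (‖toEuclideanCLM (𝕜 := ℂ) A x‖ ^ 2 : ℝ) = Complex.re ⟪x, T x⟫_ℂ := by
    rw [hTdef, _root_.map_mul, ← Matrix.star_eq_conjTranspose, map_star,
      ContinuousLinearMap.star_eq_adjoint, ContinuousLinearMap.mul_apply,
      ContinuousLinearMap.adjoint_inner_right, ← RCLike.re_to_complex, inner_self_eq_norm_sq]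
  have h2 : ⟪x, T x⟫_ℂ = ∑ i, ((hB.eigenvalues i * ‖⟪hB.eigenvectorBasis i, x⟫_ℂ‖ ^ 2 : ℝ) : ℂ) := by
    rw [← hB.eigenvectorBasis.sum_inner_mul_inner x (T x)]
    refine Finset.sum_congr rfl fun i _ => ?_
    have hi : ⟪hB.eigenvectorBasis i, T x⟫_ℂ
        = (hB.eigenvalues i : ℂ) * ⟪hB.eigenvectorBasis i, x⟫_ℂ := by
      rw [← ContinuousLinearMap.adjoint_inner_left, hT, clm_eig, inner_smul_left]
      simp
    rw [hi, ← inner_conj_symm]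
    rw [show (starRingEnd ℂ) ⟪hB.eigenvectorBasis i, x⟫_ℂ * ((hB.eigenvalues i : ℂ) * ⟪hB.eigenvectorBasis i, x⟫_ℂ)
        = (hB.eigenvalues i : ℂ) * ((starRingEnd ℂ) ⟪hB.eigenvectorBasis i, x⟫_ℂ * ⟪hB.eigenvectorBasis i, x⟫_ℂ) by ring,
      RCLike.conj_mul]
    simp [Complex.ofReal_mul, Complex.ofReal_pow]
  rw [h1, h2]
  norm_cast

lemma norm_sq_parseval (x : EuclideanSpace ℂ (Fin (N + 1)))
    (b : OrthonormalBasis (Fin (N + 1)) ℂ (EuclideanSpace ℂ (Fin (N + 1)))) :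
    ‖x‖ ^ 2 = ∑ i, ‖⟪b i, x⟫_ℂ‖ ^ 2 := by
  have h := b.sum_inner_mul_inner x x
  have h2 : ∑ i, ⟪x, b i⟫_ℂ * ⟪b i, x⟫_ℂ = ∑ i, ((‖⟪b i, x⟫_ℂ‖ ^ 2 : ℝ) : ℂ) := by
    refine Finset.sum_congr rfl fun i _ => ?_
    rw [← inner_conj_symm, RCLike.conj_mul]
    norm_cast
  rw [h2] at h
  rw [← inner_self_eq_norm_sq (𝕜 := ℂ) x, ← h, map_sum]
  simp [← Complex.ofReal_pow]

lemma sMin_nonneg (A : Matrix (Fin (N + 1)) (Fin (N + 1)) ℂ) : 0 ≤ sMin A :=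
  Real.sqrt_nonneg _

lemma sMin_eq (A : Matrix (Fin (N + 1)) (Fin (N + 1)) ℂ) :
    sMin A = Real.sqrt ((isHermitian_conjTranspose_mul_self A).eigenvalues
      (Tuple.sort ((Matrix.isHermitian_conjTranspose_mul_self A).eigenvalues) 0)) := by
  simp [sMin, svals, Fin.rev_last]

lemma sMin_sq (A : Matrix (Fin (N + 1)) (Fin (N + 1)) ℂ) :
    sMin A ^ 2 = (isHermitian_conjTranspose_mul_self A).eigenvalues
      (Tuple.sort ((Matrix.isHermitian_conjTranspose_mul_self A).eigenvalues) 0) := by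
  rw [sMin_eq, Real.sq_sqrt (Matrix.eigenvalues_conjTranspose_mul_self_nonneg A _)]

lemma sMin_mul_norm_le (A : Matrix (Fin (N + 1)) (Fin (N + 1)) ℂ)
    (x : EuclideanSpace ℂ (Fin (N + 1))) :
    sMin A * ‖x‖ ≤ ‖toEuclideanCLM (𝕜 := ℂ) A x‖ := by
  have hsq : (sMin A * ‖x‖) ^ 2 ≤ ‖toEuclideanCLM (𝕜 := ℂ) A x‖ ^ 2 := by
    rw [mul_pow, sMin_sq, norm_clm_sq A x,
      norm_sq_parseval x (isHermitian_conjTranspose_mul_self A).eigenvectorBasis, Finset.mul_sum]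
    refine Finset.sum_le_sum fun i _ => ?_
    exact mul_le_mul_of_nonneg_right (sort_zero_le _ i) (by positivity)
  have h := Real.sqrt_le_sqrt hsq
  rwa [Real.sqrt_sq (mul_nonneg (sMin_nonneg A) (norm_nonneg x)),
    Real.sqrt_sq (norm_nonneg _)] at h

lemma exists_sMin_vector (A : Matrix (Fin (N + 1)) (Fin (N + 1)) ℂ) :
    ∃ x : EuclideanSpace ℂ (Fin (N + 1)), ‖x‖ = 1 ∧
      ‖toEuclideanCLM (𝕜 := ℂ) A x‖ = sMin A := by
  set hB := isHermitian_conjTranspose_mul_self A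
  set i0 := Tuple.sort hB.eigenvalues 0 with hi0
  refine ⟨hB.eigenvectorBasis i0, hB.eigenvectorBasis.orthonormal.1 i0, ?_⟩
  have hsq : ‖toEuclideanCLM (𝕜 := ℂ) A (hB.eigenvectorBasis i0)‖ ^ 2 = hB.eigenvalues i0 := by
    rw [norm_clm_sq A (hB.eigenvectorBasis i0)]
    rw [Finset.sum_eq_single i0]
    · simp [hB.eigenvectorBasis.orthonormal.1 i0, inner_self_eq_norm_sq_to_K]
    · intro b _ hb
      have : ⟪hB.eigenvectorBasis b, hB.eigenvectorBasis i0⟫_ℂ = 0 :=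
        hB.eigenvectorBasis.orthonormal.2 hb
      simp [this]
    · simp
  have h := congrArg Real.sqrt hsq
  rwa [Real.sqrt_sq (norm_nonneg _), ← sMin_eq] at h

variable {k : ℕ}

lemma clm_mulVec (A : Matrix (Fin k) (Fin k) ℂ) (v : Fin k → ℂ) :
    toEuclideanCLM (𝕜 := ℂ) A ((WithLp.equiv 2 (Fin k → ℂ)).symm v)
      = (WithLp.equiv 2 (Fin k → ℂ)).symm (A *ᵥ v) := by
  rfl

lemma norm_clm_le (A : Matrix (Fin k) (Fin k) ℂ) (x : EuclideanSpace ℂ (Fin k)) :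
    ‖toEuclideanCLM (𝕜 := ℂ) A x‖ ≤ specNorm A * ‖x‖ :=
  (toEuclideanCLM (𝕜 := ℂ) A).le_opNorm x

lemma specNorm_le_bound (A : Matrix (Fin k) (Fin k) ℂ) {c : ℝ} (hc : 0 ≤ c)
    (h : ∀ x : EuclideanSpace ℂ (Fin k), ‖toEuclideanCLM (𝕜 := ℂ) A x‖ ≤ c * ‖x‖) :
    specNorm A ≤ c :=
  ContinuousLinearMap.opNorm_le_bound _ hc h

lemma specNorm_nonneg (A : Matrix (Fin k) (Fin k) ℂ) : 0 ≤ specNorm A :=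
  norm_nonneg _

set_option synthInstance.maxHeartbeats 400000 in
lemma specNorm_smul (c : ℂ) (A : Matrix (Fin k) (Fin k) ℂ) :
    specNorm (c • A) = ‖c‖ * specNorm A := by
  unfold specNorm
  rw [_root_.map_smul]
  exact norm_smul c (toEuclideanCLM (𝕜 := ℂ) A)

lemma specNorm_sum_le {ι : Type*} (s : Finset ι) (f : ι → Matrix (Fin k) (Fin k) ℂ) :
    specNorm (∑ i ∈ s, f i) ≤ ∑ i ∈ s, specNorm (f i) := by
  unfold specNorm
  rw [map_sum]
  exact norm_sum_le _ _

lemma vecMulVec_mulVec' (a b v : Fin k → ℂ) :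
    Matrix.vecMulVec a b *ᵥ v = (b ⬝ᵥ v) • a := by
  funext i
  simp [Matrix.vecMulVec_apply, Matrix.mulVec, dotProduct, Finset.mul_sum, Finset.sum_mul,
    mul_comm, mul_assoc, mul_left_comm]

lemma sMin_le_of_singular (A E : Matrix (Fin (N + 1)) (Fin (N + 1)) ℂ)
    (h : (A + E).det = 0) : sMin A ≤ specNorm E := by
  obtain ⟨v, hv0, hv⟩ := Matrix.exists_mulVec_eq_zero_iff.2 h
  set x : EuclideanSpace ℂ (Fin (N + 1)) := (WithLp.equiv 2 (Fin (N + 1) → ℂ)).symm v with hxdef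
  have hx : x ≠ 0 := by
    simpa [hxdef] using hv0
  have hAv : A *ᵥ v = -(E *ᵥ v) := by
    rw [Matrix.add_mulVec] at hv
    linear_combination (norm := module) hv
  have h1 : sMin A * ‖x‖ ≤ ‖toEuclideanCLM (𝕜 := ℂ) E x‖ := by
    have hle := sMin_mul_norm_le A x
    rw [hxdef, clm_mulVec, hAv] at hle
    have h2 : toEuclideanCLM (𝕜 := ℂ) E x = (WithLp.equiv 2 (Fin (N + 1) → ℂ)).symm (E *ᵥ v) := by
      rw [hxdef, clm_mulVec]
    have h3 : ‖(WithLp.equiv 2 (Fin (N + 1) → ℂ)).symm (-(E *ᵥ v))‖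
        = ‖(WithLp.equiv 2 (Fin (N + 1) → ℂ)).symm (E *ᵥ v)‖ := by
      rw [show (WithLp.equiv 2 (Fin (N + 1) → ℂ)).symm (-(E *ᵥ v))
        = -((WithLp.equiv 2 (Fin (N + 1) → ℂ)).symm (E *ᵥ v)) from rfl, norm_neg]
    rw [h2, ← h3]
    exact hle
  have h2 : ‖toEuclideanCLM (𝕜 := ℂ) E x‖ ≤ specNorm E * ‖x‖ := norm_clm_le E x
  have hxpos : 0 < ‖x‖ := norm_pos_iff.2 hx
  exact le_of_mul_le_mul_right (h1.trans h2) hxpos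

lemma exists_rankOne (A : Matrix (Fin (N + 1)) (Fin (N + 1)) ℂ) :
    ∃ E : Matrix (Fin (N + 1)) (Fin (N + 1)) ℂ,
      specNorm E ≤ sMin A ∧ (A + E).det = 0 := by
  obtain ⟨x, hx1, hxA⟩ := exists_sMin_vector A
  set v : Fin (N + 1) → ℂ := WithLp.equiv 2 (Fin (N + 1) → ℂ) x with hvdef
  have hxv : x = (WithLp.equiv 2 (Fin (N + 1) → ℂ)).symm v := rfl
  set y : Fin (N + 1) → ℂ := A *ᵥ v with hydef
  have hynorm : ‖(WithLp.equiv 2 (Fin (N + 1) → ℂ)).symm y‖ = sMin A := by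
    rw [← hxA, hxv, clm_mulVec]
  refine ⟨-Matrix.vecMulVec y (star v), ?_, ?_⟩
  · apply specNorm_le_bound _ (sMin_nonneg A)
    intro z
    have hz : toEuclideanCLM (𝕜 := ℂ) (-Matrix.vecMulVec y (star v)) z
        = -((star v ⬝ᵥ WithLp.equiv 2 (Fin (N + 1) → ℂ) z) •
            (WithLp.equiv 2 (Fin (N + 1) → ℂ)).symm y) := by
      conv_lhs => rw [show z = (WithLp.equiv 2 (Fin (N + 1) → ℂ)).symm
        (WithLp.equiv 2 (Fin (N + 1) → ℂ) z) from rfl]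
      rw [clm_mulVec, Matrix.neg_mulVec, vecMulVec_mulVec']
      rfl
    rw [hz, norm_neg, norm_smul, hynorm]
    have hinner : star v ⬝ᵥ WithLp.equiv 2 (Fin (N + 1) → ℂ) z = ⟪x, z⟫_ℂ :=
      by rw [EuclideanSpace.inner_eq_star_dotProduct, dotProduct_comm]; rfl
    rw [hinner]
    have := norm_inner_le_norm (𝕜 := ℂ) x z
    rw [hx1, one_mul] at this
    calc ‖⟪x, z⟫_ℂ‖ * sMin A ≤ ‖z‖ * sMin A :=
          mul_le_mul_of_nonneg_right this (sMin_nonneg A)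
      _ = sMin A * ‖z‖ := mul_comm _ _
  · rw [← Matrix.exists_mulVec_eq_zero_iff]
    refine ⟨v, ?_, ?_⟩
    · intro h0
      rw [hvdef] at h0
      apply_fun (WithLp.equiv 2 (Fin (N + 1) → ℂ)).symm at h0
      simp only [Equiv.symm_apply_apply] at h0
      rw [h0] at hx1
      simp at hx1
    · rw [Matrix.add_mulVec, Matrix.neg_mulVec, vecMulVec_mulVec']
      have hvv : star v ⬝ᵥ v = 1 := by
        have h := EuclideanSpace.inner_eq_star_dotProduct x x
        rw [inner_self_eq_norm_sq_to_K, hx1] at h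
        rw [dotProduct_comm]
        exact h.symm.trans (by simp)
      rw [hvv, one_smul, ← hydef]
      simp

end Aux

/-- Tisseur–Higham. `s_n(P(μ)) ≤ ε w(|μ|)` iff `μ` is an eigenvalue of
some perturbation `Q(λ) = Σ (P_j + Δ_j) λ^j` with `‖Δ_j‖ ≤ ε w_j` for all `j`. -/
theorem stmt10 {n m : ℕ} (P : Fin (m + 1) → Matrix (Fin (n + 1)) (Fin (n + 1)) ℂ)
    (w : Fin (m + 1) → ℝ) (hw : ∀ j, 0 ≤ w j) (hw0 : 0 < w 0) (ε : ℝ) (hε : 0 ≤ ε)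
    (μ : ℂ) :
    sMin (polyEval P μ) ≤ ε * wEval w (‖μ‖) ↔
      ∃ Δ : Fin (m + 1) → Matrix (Fin (n + 1)) (Fin (n + 1)) ℂ,
        (∀ j, specNorm (Δ j) ≤ ε * w j) ∧
          (∑ j : Fin (m + 1), μ ^ (j : ℕ) • (P j + Δ j)).det = 0 := by
  set W := wEval w (‖μ‖) with hWdef
  set A := polyEval P μ with hAdef
  have hterm : ∀ j : Fin (m + 1), 0 ≤ w j * ‖μ‖ ^ (j : ℕ) :=
    fun j => mul_nonneg (hw j) (pow_nonneg (norm_nonneg μ) _)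
  have hW : 0 < W := by
    rw [hWdef, wEval]
    refine Finset.sum_pos' (fun j _ => hterm j) ⟨0, Finset.mem_univ _, ?_⟩
    simpa using hw0
  constructor
  · intro h
    obtain ⟨E, hE, hdet⟩ := exists_rankOne A
    set c : Fin (m + 1) → ℂ :=
      fun j => ((w j * ‖μ‖ ^ (j : ℕ) / W : ℝ) : ℂ) / μ ^ (j : ℕ) with hcdef
    refine ⟨fun j => c j • E, ?_, ?_⟩
    · intro j
      rw [specNorm_smul]
      have hcj : ‖c j‖ ≤ w j / W := by
        rw [hcdef]
        by_cases hz : μ ^ (j : ℕ) = 0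
        · simp only [hz, div_zero, norm_zero]
          exact div_nonneg (hw j) hW.le
        · rw [norm_div, Complex.norm_real, Real.norm_eq_abs,
            abs_of_nonneg (div_nonneg (hterm j) hW.le), norm_pow]
          have habs : ‖μ‖ ^ (j : ℕ) ≠ 0 := by
            simpa [pow_eq_zero_iff', norm_eq_zero] using hz
          rw [div_div, mul_comm W (‖μ‖ ^ (j : ℕ)), ← div_div,
            mul_div_assoc, div_self habs, mul_one]
      have hEle : specNorm E ≤ ε * W := hE.trans h
      calc ‖c j‖ * specNorm E ≤ (w j / W) * (ε * W) :=
            mul_le_mul hcj hEle (specNorm_nonneg E) (div_nonneg (hw j) hW.le)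
        _ = ε * w j := by field_simp
    · have hsum : ∑ j : Fin (m + 1), μ ^ (j : ℕ) • (P j + c j • E) = A + E := by
        have hc1 : ∑ j : Fin (m + 1), μ ^ (j : ℕ) * c j = 1 := by
          have hterm' : ∀ j : Fin (m + 1), μ ^ (j : ℕ) * c j
              = ((w j * ‖μ‖ ^ (j : ℕ) / W : ℝ) : ℂ) := by
            intro j
            rw [hcdef]
            by_cases hz : μ ^ (j : ℕ) = 0
            · have hz' : μ = 0 ∧ (j : ℕ) ≠ 0 := by rwa [pow_eq_zero_iff'] at hz
              obtain ⟨hμ0, hj0⟩ := hz'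
              simp [hz, hμ0, zero_pow hj0]
            · exact mul_div_cancel₀ _ hz
          rw [Finset.sum_congr rfl fun j _ => hterm' j]
          push_cast
          rw [← Finset.sum_div]
          rw [show ∑ j : Fin (m + 1), (w j : ℂ) * ((‖μ‖ : ℝ) : ℂ) ^ (j : ℕ) = (W : ℂ) by
            rw [hWdef, wEval]; push_cast; ring_nf]
          rw [div_self]
          exact_mod_cast hW.ne'
        calc ∑ j : Fin (m + 1), μ ^ (j : ℕ) • (P j + c j • E)
            = (∑ j : Fin (m + 1), μ ^ (j : ℕ) • P j)
              + (∑ j : Fin (m + 1), (μ ^ (j : ℕ) * c j)) • E := by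
              rw [Finset.sum_smul]
              rw [← Finset.sum_add_distrib]
              refine Finset.sum_congr rfl fun j _ => ?_
              rw [smul_add, smul_smul]
          _ = A + E := by rw [hc1, one_smul, hAdef, polyEval]
      rw [hsum]
      exact hdet
  · rintro ⟨Δ, hΔ, hdet⟩
    set E := ∑ j : Fin (m + 1), μ ^ (j : ℕ) • Δ j with hEdef
    have hsum : ∑ j : Fin (m + 1), μ ^ (j : ℕ) • (P j + Δ j) = A + E := by
      rw [hAdef, polyEval, hEdef, ← Finset.sum_add_distrib]
      exact Finset.sum_congr rfl fun j _ => smul_add _ _ _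
    rw [hsum] at hdet
    have h1 : sMin A ≤ specNorm E := sMin_le_of_singular A E hdet
    have h2 : specNorm E ≤ ε * W := by
      calc specNorm E ≤ ∑ j : Fin (m + 1), specNorm (μ ^ (j : ℕ) • Δ j) :=
            specNorm_sum_le _ _
        _ ≤ ∑ j : Fin (m + 1), ‖μ‖ ^ (j : ℕ) * (ε * w j) := by
            refine Finset.sum_le_sum fun j _ => ?_
            rw [specNorm_smul, norm_pow]
            exact mul_le_mul_of_nonneg_left (hΔ j) (pow_nonneg (norm_nonneg μ) _)
        _ = ε * W := by
            rw [hWdef, wEval, Finset.mul_sum]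
            exact Finset.sum_congr rfl fun j _ => by ring
    exact h1.trans h2
end

section
/- Let P(λ) be an n×n matrix polynomial, w a weight function, ε > 0, and let μ ∈ ℂ with s_n(μ) ≤ ε w(|μ|) and μ not an eigenvalue of P, where the smallest singular value s_n(μ) of P(μ) has multiplicity k ≥ 1 (i.e., s_{n-k}(μ) > s_{n-k+1}(μ) = ... = s_n(μ) > 0). Then there exists a matrix polynomial Q(λ) = Σ (P_j + Δ_j) λ^j with ‖Δ_j‖ ≤ ε w_j for all j such that μ is an eigenvalue of Q with geometric multiplicity exactly k. -/
open Matrix Finset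

open scoped Matrix.Norms.L2Operator in
lemma specNorm_smul_aux {N : ℕ} (c : ℂ) (M : Matrix (Fin N) (Fin N) ℂ) :
    specNorm (c • M) = ‖c‖ * specNorm M := by
  have h : ∀ X : Matrix (Fin N) (Fin N) ℂ, specNorm X = ‖X‖ :=
    fun X => (Matrix.cstar_norm_def X).symm
  rw [h, h, norm_smul]

open scoped Matrix.Norms.L2Operator in
lemma specNorm_proj_bound_aux {N : ℕ} (A Pr : Matrix (Fin N) (Fin N) ℂ) (σ2 : ℝ)
    (hσ2 : 0 ≤ σ2) (hPrH : Prᴴ = Pr) (hPr2 : Pr * Pr = Pr)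
    (hEE : (A * Pr)ᴴ * (A * Pr) = (σ2 : ℂ) • Pr) :
    specNorm (-(A * Pr)) ≤ Real.sqrt σ2 := by
  have h : ∀ X : Matrix (Fin N) (Fin N) ℂ, specNorm X = ‖X‖ :=
    fun X => (Matrix.cstar_norm_def X).symm
  have hPrn : ‖Pr‖ ≤ 1 := by
    have h1 : ‖Pr‖ * ‖Pr‖ = ‖Pr‖ := by
      rw [← Matrix.l2_opNorm_conjTranspose_mul_self Pr, hPrH, hPr2]
    nlinarith [norm_nonneg Pr]
  have hAPrn2 : ‖A * Pr‖ * ‖A * Pr‖ ≤ σ2 := by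
    rw [← Matrix.l2_opNorm_conjTranspose_mul_self (A * Pr), hEE, norm_smul,
      Complex.norm_real, Real.norm_eq_abs, abs_of_nonneg hσ2]
    calc σ2 * ‖Pr‖ ≤ σ2 * 1 := mul_le_mul_of_nonneg_left hPrn hσ2
      _ = σ2 := mul_one _
  rw [h, norm_neg]
  exact Real.le_sqrt_of_sq_le (by rw [sq]; exact hAPrn2)

/-- If `μ ∈ Λ_ε(P) \ σ(P)` and the smallest singular value of `P(μ)`
has multiplicity `k`, then some `Q ∈ B(P,ε,w)` has `μ` as an eigenvalue of geometric
multiplicity exactly `k`. -/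
theorem stmt11 {n m : ℕ} (P : Fin (m + 1) → Matrix (Fin (n + 1)) (Fin (n + 1)) ℂ)
    (w : Fin (m + 1) → ℝ) (hw : ∀ j, 0 ≤ w j) (hw0 : 0 < w 0) (ε : ℝ) (hε : 0 < ε)
    (μ : ℂ) (hμps : sMin (polyEval P μ) ≤ ε * wEval w (‖μ‖))
    (hμns : (polyEval P μ).det ≠ 0)
    (k : ℕ) (hk : 0 < k) (hkn : k ≤ n + 1)
    (hmult1 : ∀ i : Fin (n + 1), n + 1 - k ≤ (i : ℕ) →
      svals (polyEval P μ) i = sMin (polyEval P μ))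
    (hmult2 : ∀ i : Fin (n + 1), (i : ℕ) < n + 1 - k →
      sMin (polyEval P μ) < svals (polyEval P μ) i) :
    ∃ Δ : Fin (m + 1) → Matrix (Fin (n + 1)) (Fin (n + 1)) ℂ,
      (∀ j, specNorm (Δ j) ≤ ε * w j) ∧
        Module.finrank ℂ
          (LinearMap.ker (∑ j : Fin (m + 1), μ ^ (j : ℕ) • (P j + Δ j)).mulVecLin)
            = k := by
  classical
  set A := polyEval P μ with hAdef
  set r : ℝ := ‖μ‖ with hrdef
  set W : ℝ := wEval w r with hWdef
  have hWpos : 0 < W := by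
    rw [hWdef, wEval]
    refine Finset.sum_pos' (fun j _ => mul_nonneg (hw j) (by positivity)) ⟨0, Finset.mem_univ _, ?_⟩
    simp only [Fin.val_zero, pow_zero, mul_one]
    exact hw0
  have hA := Matrix.isHermitian_conjTranspose_mul_self A
  set lam := (Matrix.isHermitian_conjTranspose_mul_self A).eigenvalues with hlam
  set srt := Tuple.sort lam with hsrtdef
  set σ2 := lam (srt 0) with hσ2
  have hlam0 : ∀ i, 0 ≤ lam i := fun i =>
    Matrix.eigenvalues_conjTranspose_mul_self_nonneg A i
  have hsmin : sMin A = Real.sqrt σ2 := by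
    simp only [sMin, svals, Fin.rev_last, hσ2, ← hlam, ← hsrtdef]
  have hsval : ∀ p : Fin (n + 1), svals A p.rev = Real.sqrt (lam (srt p)) := by
    intro p
    simp only [svals, Fin.rev_rev, ← hlam, ← hsrtdef]
  -- eigenvalue multiplicity facts
  have key : ∀ p : Fin (n + 1), lam (srt p) = σ2 ↔ (p : ℕ) < k := by
    intro p
    have hpv := p.isLt
    constructor
    · intro h
      by_contra hpk
      push_neg at hpk
      have h2 := hmult2 p.rev (by rw [Fin.val_rev]; omega)
      rw [hsval p, hsmin, h] at h2
      exact lt_irrefl _ h2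
    · intro hp
      have h1 := hmult1 p.rev (by rw [Fin.val_rev]; omega)
      rw [hsval p, hsmin] at h1
      exact (Real.sqrt_inj (hlam0 _) (hlam0 _)).mp h1
  have hcard : Fintype.card {i : Fin (n + 1) // lam i = σ2} = k := by
    have e1 : {p : Fin (n + 1) // lam (srt p) = σ2} ≃ {i : Fin (n + 1) // lam i = σ2} :=
      (srt : Equiv.Perm (Fin (n + 1))).subtypeEquiv (fun p => Iff.rfl)
    have e2 : {p : Fin (n + 1) // lam (srt p) = σ2} ≃ {p : Fin (n + 1) // (p : ℕ) < k} :=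
      Equiv.subtypeEquivRight key
    have e3 : {p : Fin (n + 1) // (p : ℕ) < k} ≃ Fin k :=
      { toFun := fun p => ⟨p.1, p.2⟩
        invFun := fun q => ⟨⟨q.1, lt_of_lt_of_le q.2 hkn⟩, q.2⟩
        left_inv := fun p => by ext; rfl
        right_inv := fun q => rfl }
    rw [← Fintype.card_congr e1, Fintype.card_congr e2, Fintype.card_congr e3, Fintype.card_fin]
  -- the unitary and projection
  set V : Matrix (Fin (n + 1)) (Fin (n + 1)) ℂ := ↑(hA.eigenvectorUnitary) with hVdef
  have hV1 : Vᴴ * V = 1 := by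
    rw [← Matrix.star_eq_conjTranspose]
    exact Matrix.mem_unitaryGroup_iff'.mp hA.eigenvectorUnitary.2
  have hV2 : V * Vᴴ = 1 := by
    rw [← Matrix.star_eq_conjTranspose]
    exact Matrix.mem_unitaryGroup_iff.mp hA.eigenvectorUnitary.2
  have hcancel : ∀ X Y : Matrix (Fin (n + 1)) (Fin (n + 1)) ℂ,
      (V * X * Vᴴ) * (V * Y * Vᴴ) = V * (X * Y) * Vᴴ := by
    intro X Y
    calc (V * X * Vᴴ) * (V * Y * Vᴴ) = V * (X * ((Vᴴ * V) * (Y * Vᴴ))) := by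
          simp only [Matrix.mul_assoc]
      _ = V * (X * Y) * Vᴴ := by rw [hV1, Matrix.one_mul, Matrix.mul_assoc, Matrix.mul_assoc]
  set d : Fin (n + 1) → ℂ := fun i => if lam i = σ2 then 1 else 0 with hd
  have hds : star d = d := by
    funext i
    by_cases h : lam i = σ2 <;> simp [hd, h]
  have hdd : Matrix.diagonal d * Matrix.diagonal d = Matrix.diagonal d := by
    rw [Matrix.diagonal_mul_diagonal]
    refine congrArg Matrix.diagonal (funext fun i => ?_)
    by_cases h : lam i = σ2 <;> simp [hd, h]
  set Pr : Matrix (Fin (n + 1)) (Fin (n + 1)) ℂ := V * Matrix.diagonal d * Vᴴ with hPrdef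
  have hPrH : Prᴴ = Pr := by
    rw [hPrdef]
    simp only [Matrix.conjTranspose_mul, Matrix.conjTranspose_conjTranspose,
      Matrix.diagonal_conjTranspose, hds, Matrix.mul_assoc]
  have hPr2 : Pr * Pr = Pr := by
    rw [hPrdef, hcancel, hdd]
  have hspec : Aᴴ * A = V * Matrix.diagonal (RCLike.ofReal ∘ lam) * Vᴴ := by
    have h := hA.spectral_theorem
    rw [Unitary.conjStarAlgAut_apply, Matrix.star_eq_conjTranspose] at h
    exact h
  have hEE : (A * Pr)ᴴ * (A * Pr) = (σ2 : ℂ) • Pr := by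
    have h1 : (A * Pr)ᴴ * (A * Pr) = Prᴴ * (Aᴴ * A) * Pr := by
      rw [Matrix.conjTranspose_mul]
      simp only [Matrix.mul_assoc]
    rw [h1, hPrH, hspec, hPrdef, hcancel, hcancel]
    have h2 : Matrix.diagonal d * Matrix.diagonal (RCLike.ofReal ∘ lam) * Matrix.diagonal d
        = (σ2 : ℂ) • Matrix.diagonal d := by
      rw [Matrix.diagonal_mul_diagonal, Matrix.diagonal_mul_diagonal,
        ← Matrix.diagonal_smul]
      refine congrArg Matrix.diagonal (funext fun i => ?_)
      by_cases h : lam i = σ2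
      · simp only [hd, Pi.smul_apply, h, if_pos, Function.comp_apply, smul_eq_mul]
        simp [h, RCLike.ofReal_alg]
      · simp [hd, h]
    rw [h2, Matrix.mul_smul, Matrix.smul_mul]
  have hσ2nn : 0 ≤ σ2 := hlam0 _
  -- norm bound
  set E : Matrix (Fin (n + 1)) (Fin (n + 1)) ℂ := -(A * Pr) with hEdef
  have hEn : specNorm E ≤ Real.sqrt σ2 := by
    rw [hEdef]
    exact specNorm_proj_bound_aux A Pr σ2 hσ2nn hPrH hPr2 hEE
  set c : Fin (m + 1) → ℂ :=
    fun j => ((starRingEnd ℂ) μ) ^ (j : ℕ) * (w j : ℂ) / (((r : ℂ)) ^ (j : ℕ) * (W : ℂ))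
    with hc
  have hrnn : (0:ℝ) ≤ r := by rw [hrdef]; exact norm_nonneg μ
  have hcabs : ∀ j, ‖c j‖ ≤ w j / W := by
    intro j
    have habs : ‖c j‖ = (r ^ (j : ℕ) * w j) / (r ^ (j : ℕ) * W) := by
      rw [hc]
      simp only [norm_div, norm_mul, norm_pow, Complex.norm_conj,
        Complex.norm_real, Real.norm_eq_abs, ← hrdef]
      rw [abs_of_nonneg (hw j), abs_of_nonneg hWpos.le, abs_of_nonneg hrnn]
    rw [habs]
    by_cases hrj : r ^ (j : ℕ) = 0
    · rw [hrj]
      simp only [zero_mul, zero_div]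
      exact div_nonneg (hw j) hWpos.le
    · rw [mul_div_mul_left _ _ hrj]
  have hsum : ∑ j : Fin (m + 1), μ ^ (j : ℕ) * c j = 1 := by
    have hterm : ∀ j : Fin (m + 1),
        μ ^ (j : ℕ) * c j = (((r ^ (j : ℕ) * w j) / W : ℝ) : ℂ) := by
      intro j
      rw [hc]
      by_cases hr0 : r = 0
      · have hμ0 : μ = 0 := by
          rw [hrdef] at hr0
          exact norm_eq_zero.mp hr0
        by_cases hj : (j : ℕ) = 0
        · simp only [hj, pow_zero, one_mul, mul_one]
          push_cast
          ring
        · simp [hμ0, hr0, zero_pow hj]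
      · have hrC : ((r : ℂ)) ≠ 0 := by exact_mod_cast hr0
        have hmc : μ * (starRingEnd ℂ) μ = ((r : ℂ)) ^ 2 := by
          rw [Complex.mul_conj, Complex.normSq_eq_norm_sq, hrdef]
          push_cast
          ring
        have hWC : ((W : ℂ)) ≠ 0 := by exact_mod_cast hWpos.ne'
        calc μ ^ (j : ℕ) * ((starRingEnd ℂ) μ ^ (j : ℕ) * (w j : ℂ) /
              (((r : ℂ)) ^ (j : ℕ) * (W : ℂ)))
            = (μ * (starRingEnd ℂ) μ) ^ (j : ℕ) * (w j : ℂ) /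
              (((r : ℂ)) ^ (j : ℕ) * (W : ℂ)) := by rw [mul_pow]; ring
          _ = (((r : ℂ)) ^ 2) ^ (j : ℕ) * (w j : ℂ) /
              (((r : ℂ)) ^ (j : ℕ) * (W : ℂ)) := by rw [hmc]
          _ = (((r : ℂ)) ^ (j : ℕ) * (w j : ℂ)) / (W : ℂ) := by
              rw [sq, mul_pow]
              field_simp
          _ = (((r ^ (j : ℕ) * w j) / W : ℝ) : ℂ) := by push_cast; ring
    rw [Finset.sum_congr rfl (fun j _ => hterm j), ← Complex.ofReal_sum]
    rw [show ∑ j : Fin (m + 1), (r ^ (j : ℕ) * w j) / W = 1 from ?_]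
    · exact Complex.ofReal_one
    · rw [← Finset.sum_div]
      rw [div_eq_one_iff_eq hWpos.ne']
      rw [hWdef, wEval]
      exact Finset.sum_congr rfl (fun j _ => mul_comm _ _)
  refine ⟨fun j => c j • E, ?_, ?_⟩
  · intro j
    have h1 : specNorm (c j • E) = ‖c j‖ * specNorm E :=
      specNorm_smul_aux (c j) E
    rw [h1]
    calc ‖c j‖ * specNorm E ≤ (w j / W) * Real.sqrt σ2 := by
          refine mul_le_mul (hcabs j) hEn ?_ ?_
          · rw [specNorm]; exact norm_nonneg _
          · exact div_nonneg (hw j) hWpos.le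
      _ ≤ (w j / W) * (ε * W) := by
          refine mul_le_mul_of_nonneg_left ?_ (div_nonneg (hw j) hWpos.le)
          rw [← hsmin]
          exact hμps
      _ = ε * w j := by field_simp
  · -- kernel dimension
    have hM : (∑ j : Fin (m + 1), μ ^ (j : ℕ) • (P j + c j • E)) = A + E := by
      have h1 : (∑ j : Fin (m + 1), μ ^ (j : ℕ) • (P j + c j • E))
          = (∑ j : Fin (m + 1), μ ^ (j : ℕ) • P j)
            + (∑ j : Fin (m + 1), (μ ^ (j : ℕ) * c j) • E) := by
        rw [← Finset.sum_add_distrib]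
        refine Finset.sum_congr rfl fun j _ => ?_
        rw [smul_add, smul_smul]
      rw [h1, ← Finset.sum_smul, hsum, one_smul]
      rfl
    rw [hM]
    set e : Fin (n + 1) → ℂ := fun i => 1 - d i with he
    have hde : Matrix.diagonal e = 1 - Matrix.diagonal d := by
      rw [← Matrix.diagonal_one, Matrix.diagonal_sub]
    have hproj : V * Matrix.diagonal e * Vᴴ = 1 - Pr := by
      rw [hde, Matrix.mul_sub, Matrix.mul_one, Matrix.sub_mul, hV2, ← hPrdef]
    have hfact : A + E = A * V * Matrix.diagonal e * Vᴴ := by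
      have h1 : A * V * Matrix.diagonal e * Vᴴ = A * (V * Matrix.diagonal e * Vᴴ) := by
        simp only [Matrix.mul_assoc]
      rw [h1, hproj, Matrix.mul_sub, Matrix.mul_one, hEdef, ← sub_eq_add_neg]
    have hVdet : IsUnit V.det := by
      apply IsUnit.of_mul_eq_one (Vᴴ.det)
      rw [← Matrix.det_mul, hV2, Matrix.det_one]
    have hVHdet : IsUnit Vᴴ.det := by
      apply IsUnit.of_mul_eq_one (V.det)
      rw [← Matrix.det_mul, hV1, Matrix.det_one]
    have hAVdet : IsUnit (A * V).det := by
      rw [Matrix.det_mul]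
      exact (isUnit_iff_ne_zero.mpr hμns).mul hVdet
    have hrank : (A + E).rank = (n + 1) - k := by
      rw [hfact, Matrix.rank_mul_eq_left_of_isUnit_det Vᴴ
          (A * V * Matrix.diagonal e) hVHdet,
        Matrix.rank_mul_eq_right_of_isUnit_det (A * V) (Matrix.diagonal e) hAVdet,
        Matrix.rank_diagonal]
      have hiff : ∀ i : Fin (n + 1), e i ≠ 0 ↔ ¬(lam i = σ2) := by
        intro i
        by_cases h : lam i = σ2 <;> simp [he, hd, h]
      rw [Fintype.card_congr (Equiv.subtypeEquivRight hiff), Fintype.card_subtype_compl,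
        hcard, Fintype.card_fin]
    have hrn := LinearMap.finrank_range_add_finrank_ker ((A + E).mulVecLin)
    have hfr : Module.finrank ℂ (Fin (n + 1) → ℂ) = n + 1 := by
      simp [Module.finrank_fintype_fun_eq_card]
    rw [hfr] at hrn
    have : (A + E).rank = Module.finrank ℂ (LinearMap.range (A + E).mulVecLin) := rfl
    omega
end

section
/- Let P(λ) be an n×n matrix polynomial with nonsingular leading coefficient and weight w, and assume ε w_m < ‖P_m⁻¹‖⁻¹ so that every Q ∈ B(P,ε,w) has nonsingular leading coefficient. Then the ε-pseudospectrum Λ_ε(P) is a bounded subset of ℂ. -/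
open Matrix Finset

set_option maxHeartbeats 1000000

/-- If `ε w_m < ‖P_m⁻¹‖⁻¹`, then the pseudospectrum `Λ_ε(P)` (defined
via the admissible perturbations `B(P,ε,w)`) is bounded. -/
theorem stmt14 {n m : ℕ} (P : Fin (m + 1) → Matrix (Fin (n + 1)) (Fin (n + 1)) ℂ)
    (hPm : (P (Fin.last m)).det ≠ 0)
    (w : Fin (m + 1) → ℝ) (hw : ∀ j, 0 ≤ w j) (hw0 : 0 < w 0)
    (ε : ℝ) (hε : 0 ≤ ε)
    (hbound : ε * w (Fin.last m) < (specNorm (P (Fin.last m))⁻¹)⁻¹) :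
    Bornology.IsBounded
      {μ : ℂ | ∃ Δ : Fin (m + 1) → Matrix (Fin (n + 1)) (Fin (n + 1)) ℂ,
        (∀ j, specNorm (Δ j) ≤ ε * w j) ∧
          (∑ j : Fin (m + 1), μ ^ (j : ℕ) • (P j + Δ j)).det = 0} := by
  classical
  set φ : Matrix (Fin (n+1)) (Fin (n+1)) ℂ ≃⋆ₐ[ℂ]
      (EuclideanSpace ℂ (Fin (n+1)) →L[ℂ] EuclideanSpace ℂ (Fin (n+1))) :=
    Matrix.toEuclideanCLM (𝕜 := ℂ) with hφ
  have hspec : ∀ A : Matrix (Fin (n+1)) (Fin (n+1)) ℂ, specNorm A = ‖φ A‖ := fun A => rfl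
  have hεw : 0 ≤ ε * w (Fin.last m) := mul_nonneg hε (hw _)
  have hbound' : ε * w (Fin.last m) < ‖φ ((P (Fin.last m))⁻¹)‖⁻¹ := hbound
  set Pm := P (Fin.last m) with hPmdef
  set b := φ (Pm⁻¹) with hb
  have hNpos : 0 < ‖b‖ := by
    rcases (norm_nonneg b).lt_or_eq with h | h
    · exact h
    · rw [← h, _root_.inv_zero] at hbound'
      exact absurd hbound' (not_lt.2 hεw)
  have hδ : ε * w (Fin.last m) * ‖b‖ < 1 := by
    have h2 := mul_lt_mul_of_pos_right hbound' hNpos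
    rwa [inv_mul_cancel₀ hNpos.ne'] at h2
  set N := ‖b‖ with hNdef
  set δ := ε * w (Fin.last m) * N with hδdef
  have hδnn : 0 ≤ δ := mul_nonneg hεw hNpos.le
  set C := ∑ j : Fin (m+1), (‖φ (P j)‖ + ε * w j) with hC
  have hCnn : 0 ≤ C := Finset.sum_nonneg fun j _ =>
    add_nonneg (norm_nonneg _) (mul_nonneg hε (hw j))
  set R := max 1 (N * C / (1 - δ)) + 1 with hR
  have hsub : {μ : ℂ | ∃ Δ : Fin (m + 1) → Matrix (Fin (n + 1)) (Fin (n + 1)) ℂ,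
        (∀ j, specNorm (Δ j) ≤ ε * w j) ∧
          (∑ j : Fin (m + 1), μ ^ (j : ℕ) • (P j + Δ j)).det = 0} ⊆
      Metric.closedBall 0 R := by
    intro μ hμ
    obtain ⟨Δ, hΔ, hdet⟩ := hμ
    rw [mem_closedBall_zero_iff]
    by_contra hcon
    push_neg at hcon
    have hmax1 : (1:ℝ) ≤ max 1 (N * C / (1 - δ)) := le_max_left _ _
    have hmax2 : N * C / (1 - δ) ≤ max 1 (N * C / (1 - δ)) := le_max_right _ _
    have hμ1 : (1 : ℝ) < ‖μ‖ := by rw [hR] at hcon; linarith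
    have hμ0 : μ ≠ 0 := by
      intro h; rw [h, norm_zero] at hμ1; linarith
    have hμpos : (0:ℝ) < ‖μ‖ := by linarith
    have hμn0 : ‖μ‖ ≠ 0 := hμpos.ne'
    set a : Fin (m+1) → (EuclideanSpace ℂ (Fin (n+1)) →L[ℂ] EuclideanSpace ℂ (Fin (n+1))) :=
      fun j => φ (P j) + φ (Δ j) with ha
    set T := ∑ j : Fin (m+1), μ ^ (j : ℕ) • a j with hT
    have hTmap : φ (∑ j : Fin (m + 1), μ ^ (j : ℕ) • (P j + Δ j)) = T := by
      rw [map_sum]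
      refine Finset.sum_congr rfl fun j _ => ?_
      rw [_root_.map_smul, map_add]
    have hb1 : φ Pm * b = 1 := by
      rw [hb, ← _root_.map_mul, Matrix.mul_nonsing_inv _ (isUnit_iff_ne_zero.2 hPm),
        _root_.map_one]
    set S := T - μ ^ m • φ Pm with hS
    set E := ((μ⁻¹) ^ m) • (b * S) with hE
    have hinv : μ ^ m * (μ⁻¹) ^ m = 1 := by
      rw [← mul_pow, mul_inv_cancel₀ hμ0, one_pow]
    have hmulE : (μ ^ m • φ Pm) * E = S := by
      rw [hE, smul_mul_assoc, mul_smul_comm, smul_smul, hinv, one_smul, ← mul_assoc, hb1,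
        one_mul]
    have hfact : (μ ^ m • φ Pm) * (1 + E) = T := by
      rw [mul_add, mul_one, hmulE, hS]; abel
    -- norm bound on E
    have hSnorm : ‖S‖ ≤ ‖μ‖ ^ m * (ε * w (Fin.last m)) + ‖μ‖ ^ m * ‖μ‖⁻¹ * C := by
      have hsplit : S = μ ^ m • φ (Δ (Fin.last m)) +
          ∑ j ∈ Finset.univ.erase (Fin.last m), μ ^ (j : ℕ) • a j := by
        rw [hS, hT, ← Finset.add_sum_erase _ _ (Finset.mem_univ (Fin.last m))]
        simp only [ha, Fin.val_last, smul_add]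
        abel
      rw [hsplit]
      refine le_trans (norm_add_le _ _) (add_le_add ?_ ?_)
      · calc ‖μ ^ m • φ (Δ (Fin.last m))‖
            = ‖μ ^ m‖ * ‖φ (Δ (Fin.last m))‖ := norm_smul (μ ^ m) (φ (Δ (Fin.last m)))
          _ ≤ ‖μ‖ ^ m * (ε * w (Fin.last m)) := by
              rw [norm_pow]
              exact mul_le_mul_of_nonneg_left (by rw [← hspec]; exact hΔ _) (by positivity)
      · refine le_trans (norm_sum_le _ _) ?_
        have step : ∀ j ∈ Finset.univ.erase (Fin.last m),
            ‖μ ^ (j : ℕ) • a j‖ ≤ ‖μ‖ ^ m * ‖μ‖⁻¹ * (‖φ (P j)‖ + ε * w j) := by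
          intro j hj
          have hjlt : (j : ℕ) + 1 ≤ m := by
            rcases lt_or_eq_of_le (Nat.lt_succ_iff.1 j.isLt) with h | h
            · exact h
            · exact absurd (Fin.ext (by simp [h])) (Finset.ne_of_mem_erase hj)
          have hpow : ‖μ‖ ^ (j : ℕ) ≤ ‖μ‖ ^ m * ‖μ‖⁻¹ := by
            rw [← div_eq_mul_inv, le_div_iff₀ hμpos, ← pow_succ]
            exact pow_le_pow_right₀ hμ1.le hjlt
          have hanorm : ‖a j‖ ≤ ‖φ (P j)‖ + ε * w j := by
            refine le_trans (norm_add_le _ _) ?_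
            exact add_le_add le_rfl (by rw [← hspec]; exact hΔ j)
          calc ‖μ ^ (j : ℕ) • a j‖ = ‖μ ^ (j : ℕ)‖ * ‖a j‖ := norm_smul (μ ^ (j : ℕ)) (a j)
            _ ≤ ‖μ‖ ^ m * ‖μ‖⁻¹ * (‖φ (P j)‖ + ε * w j) := by
                rw [norm_pow]
                exact mul_le_mul hpow hanorm (norm_nonneg _) (by positivity)
        calc (∑ j ∈ Finset.univ.erase (Fin.last m), ‖μ ^ (j : ℕ) • a j‖)
            ≤ ∑ j ∈ Finset.univ.erase (Fin.last m),
                ‖μ‖ ^ m * ‖μ‖⁻¹ * (‖φ (P j)‖ + ε * w j) := Finset.sum_le_sum step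
          _ ≤ ∑ j : Fin (m+1), ‖μ‖ ^ m * ‖μ‖⁻¹ * (‖φ (P j)‖ + ε * w j) := by
              refine Finset.sum_le_sum_of_subset_of_nonneg (Finset.erase_subset _ _) ?_
              intro j _ _
              have h0 : 0 ≤ ‖φ (P j)‖ + ε * w j :=
                add_nonneg (norm_nonneg _) (mul_nonneg hε (hw j))
              positivity
          _ = ‖μ‖ ^ m * ‖μ‖⁻¹ * C := by rw [hC, ← Finset.mul_sum]
    have hone : (‖μ‖⁻¹) ^ m * ‖μ‖ ^ m = 1 := by
      rw [← mul_pow, inv_mul_cancel₀ hμn0, one_pow]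
    have hEnorm : ‖E‖ < 1 := by
      have h1 : ‖E‖ ≤ (‖μ‖⁻¹) ^ m * (N * ‖S‖) := by
        rw [hE]
        calc ‖(μ⁻¹) ^ m • (b * S)‖ = ‖(μ⁻¹) ^ m‖ * ‖b * S‖ := norm_smul ((μ⁻¹) ^ m) (b * S)
          _ ≤ (‖μ‖⁻¹) ^ m * (N * ‖S‖) := by
              rw [norm_pow, norm_inv]
              exact mul_le_mul_of_nonneg_left (norm_mul_le _ _) (by positivity)
      have hcompute : (‖μ‖⁻¹) ^ m * (N * (‖μ‖ ^ m * (ε * w (Fin.last m)) +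
          ‖μ‖ ^ m * ‖μ‖⁻¹ * C)) = δ + N * C * ‖μ‖⁻¹ := by
        rw [hδdef]
        linear_combination (N * (ε * w (Fin.last m)) + N * C * ‖μ‖⁻¹) * hone
      have h2 : ‖E‖ ≤ δ + N * C * ‖μ‖⁻¹ := by
        rw [← hcompute]
        refine le_trans h1 ?_
        exact mul_le_mul_of_nonneg_left (mul_le_mul_of_nonneg_left hSnorm hNpos.le)
          (by positivity)
      have h1δ : 0 < 1 - δ := by linarith
      have hRμ : N * C / (1 - δ) < ‖μ‖ := by rw [hR] at hcon; linarith
      rw [div_lt_iff₀ h1δ] at hRμ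
      have h3 : N * C * ‖μ‖⁻¹ < 1 - δ := by
        rw [← div_eq_mul_inv, div_lt_iff₀ hμpos, mul_comm (1 - δ)]
        exact hRμ
      linarith
    -- invertibility
    have hunit1 : IsUnit (1 + E) := by
      have h := (Units.oneSub (-E) (by rwa [norm_neg])).isUnit
      rwa [Units.val_oneSub, sub_neg_eq_add] at h
    have hunitPm : IsUnit (φ Pm) :=
      ((Matrix.isUnit_iff_isUnit_det Pm).2 (isUnit_iff_ne_zero.2 hPm)).map φ
    have hunitsmul : IsUnit (μ ^ m • φ Pm) := by
      have heq : μ ^ m • φ Pm = (algebraMap ℂ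
          (EuclideanSpace ℂ (Fin (n+1)) →L[ℂ] EuclideanSpace ℂ (Fin (n+1))) (μ ^ m)) * φ Pm := by
        rw [Algebra.algebraMap_eq_smul_one, smul_mul_assoc, one_mul]
      rw [heq]
      exact ((isUnit_iff_ne_zero.2 (pow_ne_zero m hμ0)).map (algebraMap ℂ
        (EuclideanSpace ℂ (Fin (n+1)) →L[ℂ] EuclideanSpace ℂ (Fin (n+1))))).mul hunitPm
    have hTunit : IsUnit T := hfact ▸ hunitsmul.mul hunit1
    have hMunit : IsUnit (∑ j : Fin (m + 1), μ ^ (j : ℕ) • (P j + Δ j)) := by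
      have h := (hTmap ▸ hTunit).map φ.symm
      rwa [StarAlgEquiv.symm_apply_apply] at h
    have hdu := (Matrix.isUnit_iff_isUnit_det _).1 hMunit
    rw [hdet] at hdu
    exact absurd hdu (by simp)
  exact Metric.isBounded_closedBall.subset hsub
end

section
/- For every ε > 0, every connected component of the ε-pseudospectrum Λ_ε(P) of an n×n matrix polynomial P has non-empty interior. Equivalently, no connected component of Λ_ε(P) is a single point or a set with empty interior. -/
open Matrix Finset

open scoped ComplexOrder Matrix.Norms.L2Operator Topology

namespace S15
variable {N : ℕ}

/-- the minimal eigenvalue of `Aᴴ*A` -/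
noncomputable def mu0 (A : Matrix (Fin (N+1)) (Fin (N+1)) ℂ) : ℝ :=
  (Matrix.isHermitian_conjTranspose_mul_self A).eigenvalues
      (Tuple.sort ((Matrix.isHermitian_conjTranspose_mul_self A).eigenvalues) 0)

lemma sMin_eq_sqrt_mu0 (A : Matrix (Fin (N+1)) (Fin (N+1)) ℂ) :
    sMin A = Real.sqrt (mu0 A) := by
  rw [sMin, svals, mu0, Fin.rev_last]

lemma mu0_le (A : Matrix (Fin (N+1)) (Fin (N+1)) ℂ) (i : Fin (N+1)) :
    mu0 A ≤ (Matrix.isHermitian_conjTranspose_mul_self A).eigenvalues i := by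
  set eig := (Matrix.isHermitian_conjTranspose_mul_self A).eigenvalues
  have h := Tuple.monotone_sort eig
    (Fin.zero_le ((Tuple.sort eig).symm i) : (0 : Fin (N+1)) ≤ (Tuple.sort eig).symm i)
  simpa [mu0, eig, Function.comp] using h

lemma mu0_nonneg (A : Matrix (Fin (N+1)) (Fin (N+1)) ℂ) : 0 ≤ mu0 A :=
  (Matrix.posSemidef_conjTranspose_mul_self A).eigenvalues_nonneg _

lemma posSemidef_shift (A : Matrix (Fin (N+1)) (Fin (N+1)) ℂ) :
    (Aᴴ * A - ((mu0 A : ℂ) • 1)).PosSemidef := by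
  set hH := Matrix.isHermitian_conjTranspose_mul_self A with hHdef
  set U : Matrix (Fin (N+1)) (Fin (N+1)) ℂ := (hH.eigenvectorUnitary : Matrix (Fin (N+1)) (Fin (N+1)) ℂ) with hUdef
  have hU : U * star U = 1 := Matrix.mem_unitaryGroup_iff.mp hH.eigenvectorUnitary.2
  have hD : (Matrix.diagonal (RCLike.ofReal ∘ hH.eigenvalues) - ((mu0 A : ℂ) • 1)
      : Matrix (Fin (N+1)) (Fin (N+1)) ℂ).PosSemidef := by
    have heq : (Matrix.diagonal (RCLike.ofReal ∘ hH.eigenvalues) - ((mu0 A : ℂ) • 1)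
        : Matrix (Fin (N+1)) (Fin (N+1)) ℂ)
        = Matrix.diagonal (fun i => ((hH.eigenvalues i - mu0 A : ℝ) : ℂ)) := by
      ext i j
      by_cases h : i = j <;>
        simp [Matrix.diagonal, Matrix.one_apply, h, Matrix.sub_apply, Complex.ofReal_sub]
    rw [heq, Matrix.posSemidef_diagonal_iff]
    intro i
    rw [Complex.zero_le_real]
    simpa using mu0_le A i
  have key := hD.mul_mul_conjTranspose_same U
  have heq2 : U * (Matrix.diagonal (RCLike.ofReal ∘ hH.eigenvalues) - ((mu0 A : ℂ) • 1)) * Uᴴ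
      = Aᴴ * A - ((mu0 A : ℂ) • 1) := by
    have hspec := hH.spectral_theorem
    rw [Unitary.conjStarAlgAut_apply] at hspec
    rw [Matrix.star_eq_conjTranspose] at hspec hU
    rw [Matrix.mul_sub, Matrix.sub_mul, ← hspec]
    congr 1
    rw [Matrix.mul_smul, Matrix.mul_one, Matrix.smul_mul, hU]
  rwa [heq2] at key

end S15

namespace S15

noncomputable def enorm'' {N : ℕ} (x : Fin N → ℂ) : ℝ :=
  ‖(WithLp.equiv 2 (Fin N → ℂ)).symm x‖

lemma enorm'_nonneg (x : Fin N → ℂ) : 0 ≤ enorm'' x := norm_nonneg _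

lemma star_dot_self (x : Fin N → ℂ) :
    star x ⬝ᵥ x = ((enorm'' x : ℝ) : ℂ) ^ 2 := by
  have h := EuclideanSpace.inner_eq_star_dotProduct
    ((WithLp.equiv 2 (Fin N → ℂ)).symm x) ((WithLp.equiv 2 (Fin N → ℂ)).symm x)
  change _ = x ⬝ᵥ star x at h
  rw [dotProduct_comm, ← h, inner_self_eq_norm_sq_to_K]
  norm_cast

lemma star_dot_mulVec (A : Matrix (Fin N) (Fin N) ℂ) (x : Fin N → ℂ) :
    star x ⬝ᵥ ((Aᴴ * A) *ᵥ x) = ((enorm'' (A *ᵥ x) : ℝ) : ℂ) ^ 2 := by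
  rw [← star_dot_self (A *ᵥ x), star_mulVec, ← Matrix.mulVec_mulVec, dotProduct_mulVec]

lemma sMin_nonneg (A : Matrix (Fin (N+1)) (Fin (N+1)) ℂ) : 0 ≤ sMin A := by
  rw [sMin_eq_sqrt_mu0]; exact Real.sqrt_nonneg _

lemma sq_le_of_dot (A : Matrix (Fin (N+1)) (Fin (N+1)) ℂ) (x : Fin (N+1) → ℂ) :
    mu0 A * enorm'' x ^ 2 ≤ enorm'' (A *ᵥ x) ^ 2 := by
  have h0 := (posSemidef_shift A).re_dotProduct_nonneg x
  have hcalc : star x ⬝ᵥ ((Aᴴ * A - ((mu0 A : ℂ) • 1)) *ᵥ x)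
      = ((enorm'' (A *ᵥ x) : ℝ) : ℂ) ^ 2 - (mu0 A : ℂ) * ((enorm'' x : ℝ) : ℂ) ^ 2 := by
    rw [Matrix.sub_mulVec, dotProduct_sub, star_dot_mulVec, Matrix.smul_mulVec,
      Matrix.one_mulVec, dotProduct_smul, star_dot_self]
    simp [smul_eq_mul]
  rw [hcalc] at h0
  have : ((enorm'' (A *ᵥ x) : ℝ) : ℂ) ^ 2 - (mu0 A : ℂ) * ((enorm'' x : ℝ) : ℂ) ^ 2
      = (((enorm'' (A *ᵥ x) ^ 2 - mu0 A * enorm'' x ^ 2 : ℝ)) : ℂ) := by push_cast; ring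
  rw [this] at h0
  have h0' : (0:ℝ) ≤ (((enorm'' (A *ᵥ x) ^ 2 - mu0 A * enorm'' x ^ 2 : ℝ)) : ℂ).re := h0
  rw [Complex.ofReal_re] at h0'
  linarith

lemma sMin_mul_le (A : Matrix (Fin (N+1)) (Fin (N+1)) ℂ) (x : Fin (N+1) → ℂ) :
    sMin A * enorm'' x ≤ enorm'' (A *ᵥ x) := by
  have h := sq_le_of_dot A x
  have h2 : (sMin A * enorm'' x) ^ 2 ≤ enorm'' (A *ᵥ x) ^ 2 := by
    rw [mul_pow, sMin_eq_sqrt_mu0, Real.sq_sqrt (mu0_nonneg A)]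
    exact h
  calc sMin A * enorm'' x = Real.sqrt ((sMin A * enorm'' x) ^ 2) :=
        (Real.sqrt_sq (mul_nonneg (sMin_nonneg A) (enorm'_nonneg x))).symm
    _ ≤ Real.sqrt (enorm'' (A *ᵥ x) ^ 2) := Real.sqrt_le_sqrt h2
    _ = enorm'' (A *ᵥ x) := Real.sqrt_sq (enorm'_nonneg _)

lemma exists_min_vector (A : Matrix (Fin (N+1)) (Fin (N+1)) ℂ) :
    ∃ x : Fin (N+1) → ℂ, enorm'' x = 1 ∧ enorm'' (A *ᵥ x) = sMin A := by
  set hH := Matrix.isHermitian_conjTranspose_mul_self A with hHdef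
  set i0 := Tuple.sort hH.eigenvalues 0 with hi0
  refine ⟨(WithLp.equiv 2 (Fin (N+1) → ℂ)) (hH.eigenvectorBasis i0), ?_, ?_⟩
  · show ‖(WithLp.equiv 2 (Fin (N+1) → ℂ)).symm _‖ = 1
    rw [Equiv.symm_apply_apply]
    exact hH.eigenvectorBasis.orthonormal.1 i0
  · set x0 : Fin (N+1) → ℂ := (WithLp.equiv 2 (Fin (N+1) → ℂ)) (hH.eigenvectorBasis i0) with hx0
    have hev : (Aᴴ * A) *ᵥ x0 = (hH.eigenvalues i0) • x0 := hH.mulVec_eigenvectorBasis i0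
    have h1 : ((enorm'' (A *ᵥ x0) : ℝ) : ℂ) ^ 2 = (mu0 A : ℂ) := by
      rw [← star_dot_mulVec, hev]
      have : star x0 ⬝ᵥ (hH.eigenvalues i0 • x0) = (hH.eigenvalues i0 : ℂ) * (star x0 ⬝ᵥ x0) := by
        simp [dotProduct, Finset.mul_sum, Complex.real_smul]
        exact Finset.sum_congr rfl fun i _ => by ring
      rw [this, star_dot_self]
      have hx1 : enorm'' x0 = 1 := by
        show ‖(WithLp.equiv 2 (Fin (N+1) → ℂ)).symm _‖ = 1
        rw [hx0, Equiv.symm_apply_apply]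
        exact hH.eigenvectorBasis.orthonormal.1 i0
      rw [hx1, mu0]
      norm_num
      rfl
  -- conclude
    have h2 : enorm'' (A *ᵥ x0) ^ 2 = mu0 A := by
      exact_mod_cast h1
    rw [← Real.sqrt_sq (enorm'_nonneg (A *ᵥ x0)), h2, sMin_eq_sqrt_mu0]

lemma enorm'_add_le (y z : Fin N → ℂ) : enorm'' (y + z) ≤ enorm'' y + enorm'' z := by
  unfold enorm''
  rw [show (WithLp.equiv 2 (Fin N → ℂ)).symm (y + z)
      = (WithLp.equiv 2 (Fin N → ℂ)).symm y + (WithLp.equiv 2 (Fin N → ℂ)).symm z from rfl]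
  exact norm_add_le _ _

lemma enorm'_smul (c : ℂ) (y : Fin N → ℂ) : enorm'' (c • y) = ‖c‖ * enorm'' y := by
  unfold enorm''
  rw [show (WithLp.equiv 2 (Fin N → ℂ)).symm (c • y)
      = c • (WithLp.equiv 2 (Fin N → ℂ)).symm y from rfl]
  rw [norm_smul]

lemma enorm'_mulVec_le (M : Matrix (Fin N) (Fin N) ℂ) (y : Fin N → ℂ) :
    enorm'' (M *ᵥ y) ≤ ‖M‖ * enorm'' y := by
  exact M.l2_opNorm_mulVec ((WithLp.equiv 2 (Fin N → ℂ)).symm y)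

lemma sMin_le_add (A B : Matrix (Fin (N+1)) (Fin (N+1)) ℂ) : sMin A ≤ sMin B + ‖A - B‖ := by
  obtain ⟨x0, hx1, hx2⟩ := exists_min_vector B
  have h1 : sMin A ≤ enorm'' (A *ᵥ x0) := by
    have := sMin_mul_le A x0; rwa [hx1, mul_one] at this
  have h2 : A *ᵥ x0 = B *ᵥ x0 + (A - B) *ᵥ x0 := by
    rw [Matrix.sub_mulVec]; ring_nf
  have h3 : enorm'' (A *ᵥ x0) ≤ enorm'' (B *ᵥ x0) + enorm'' ((A - B) *ᵥ x0) := by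
    rw [h2]; exact enorm'_add_le _ _
  have h4 : enorm'' ((A - B) *ᵥ x0) ≤ ‖A - B‖ := by
    have := enorm'_mulVec_le (A - B) x0; rwa [hx1, mul_one] at this
  linarith [h1, h3, h4, hx2.le, hx2.ge]

lemma sMin_lipschitz : LipschitzWith 1 (sMin (N := N)) := by
  refine LipschitzWith.of_dist_le_mul fun A B => ?_
  rw [NNReal.coe_one, one_mul, Real.dist_eq, dist_eq_norm, abs_sub_le_iff]
  constructor
  · linarith [sMin_le_add A B]
  · have := sMin_le_add B A
    rw [norm_sub_rev] at this
    linarith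

lemma continuous_sMin_polyEval {m : ℕ} (P : Fin (m + 1) → Matrix (Fin (N+1)) (Fin (N+1)) ℂ) :
    Continuous fun lam => sMin (polyEval P lam) := by
  apply sMin_lipschitz.continuous.comp
  unfold polyEval
  exact continuous_finset_sum _ fun j _ => (continuous_pow _).smul continuous_const

lemma enorm'_pos {y : Fin N → ℂ} (hy : y ≠ 0) : 0 < enorm'' y := by
  have : (WithLp.equiv 2 (Fin N → ℂ)).symm y ≠ 0 := by
    intro h
    exact hy ((WithLp.equiv 2 (Fin N → ℂ)).symm.injective (h.trans rfl))
  exact norm_pos_iff.mpr this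

lemma abs_dot_le (v ζ : Fin N → ℂ) :
    ‖star v ⬝ᵥ ζ‖ ≤ enorm'' v * enorm'' ζ := by
  have h := EuclideanSpace.inner_eq_star_dotProduct
    ((WithLp.equiv 2 (Fin N → ℂ)).symm v) ((WithLp.equiv 2 (Fin N → ℂ)).symm ζ)
  change _ = ζ ⬝ᵥ star v at h
  rw [dotProduct_comm, ← h]
  exact norm_inner_le_norm _ _

lemma inv_dot (M : Matrix (Fin N) (Fin N) ℂ) (v u : Fin N → ℂ) :
    (M.det)⁻¹ * (star v ⬝ᵥ (M.adjugate *ᵥ u)) = star v ⬝ᵥ (M⁻¹ *ᵥ u) := by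
  rw [Matrix.inv_def, Ring.inverse_eq_inv', Matrix.smul_mulVec, dotProduct_smul,
    smul_eq_mul]

lemma sMin_mul_abs_le (M : Matrix (Fin (N+1)) (Fin (N+1)) ℂ) (u v : Fin (N+1) → ℂ)
    (hu : enorm'' u = 1) (hv : enorm'' v = 1) :
    sMin M * ‖(M.det)⁻¹ * (star v ⬝ᵥ (M.adjugate *ᵥ u))‖ ≤ 1 := by
  by_cases hdet : M.det = 0
  · simp [hdet, sMin_nonneg]
  · rw [inv_dot]
    set ζ := M⁻¹ *ᵥ u with hζ
    have hMζ : M *ᵥ ζ = u := by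
      rw [hζ, Matrix.mulVec_mulVec, Matrix.mul_nonsing_inv M (isUnit_iff_ne_zero.mpr hdet),
        Matrix.one_mulVec]
    have h1 : sMin M * enorm'' ζ ≤ 1 := by
      have := sMin_mul_le M ζ
      rwa [hMζ, hu] at this
    have h2 : ‖star v ⬝ᵥ ζ‖ ≤ enorm'' ζ := by
      have := abs_dot_le v ζ
      rwa [hv, one_mul] at this
    nlinarith [sMin_nonneg M, enorm'_nonneg ζ, norm_nonneg (star v ⬝ᵥ ζ)]

lemma wEval_pos {m : ℕ} (w : Fin (m+1) → ℝ) (hw : ∀ j, 0 ≤ w j) (hw0 : 0 < w 0)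
    {t : ℝ} (ht : 0 ≤ t) : 0 < wEval w t := by
  unfold wEval
  have h1 : w 0 * t ^ ((0 : Fin (m+1)) : ℕ) ≤ ∑ j, w j * t ^ (j : ℕ) :=
    Finset.single_le_sum (f := fun j : Fin (m+1) => w j * t ^ (j : ℕ))
      (fun j _ => mul_nonneg (hw j) (pow_nonneg ht _)) (Finset.mem_univ 0)
  simpa using lt_of_lt_of_le (by simpa using hw0) h1

lemma analyticAt_entry {m : ℕ} (P : Fin (m + 1) → Matrix (Fin N) (Fin N) ℂ) (x : ℂ)
    (i j : Fin N) : AnalyticAt ℂ (fun lam => polyEval P lam i j) x := by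
  have heq : (fun lam => polyEval P lam i j)
      = fun lam => ∑ k : Fin (m+1), lam ^ (k : ℕ) * P k i j := by
    funext lam
    simp [polyEval, Matrix.sum_apply]
  rw [heq]
  exact Finset.analyticAt_fun_sum _ fun k _ => ((analyticAt_id).pow _).mul analyticAt_const

lemma analyticAt_det {M : ℂ → Matrix (Fin N) (Fin N) ℂ} {x : ℂ}
    (h : ∀ i j, AnalyticAt ℂ (fun lam => M lam i j) x) :
    AnalyticAt ℂ (fun lam => (M lam).det) x := by
  have heq : (fun lam => (M lam).det)
      = fun lam => ∑ σ : Equiv.Perm (Fin N),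
          (((Equiv.Perm.sign σ : ℤ) : ℂ)) * ∏ i, M lam (σ i) i := by
    funext lam
    rw [Matrix.det_apply]
    exact Finset.sum_congr rfl fun σ _ => by simp [Units.smul_def, zsmul_eq_mul]
  rw [heq]
  exact Finset.analyticAt_fun_sum _ fun σ _ =>
    analyticAt_const.mul (Finset.analyticAt_fun_prod _ fun i _ => h (σ i) i)

lemma analyticAt_adj_dot {M : ℂ → Matrix (Fin N) (Fin N) ℂ} {x : ℂ} (u v : Fin N → ℂ)
    (h : ∀ i j, AnalyticAt ℂ (fun lam => M lam i j) x) :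
    AnalyticAt ℂ (fun lam => star v ⬝ᵥ ((M lam).adjugate *ᵥ u)) x := by
  have heq : (fun lam => star v ⬝ᵥ ((M lam).adjugate *ᵥ u))
      = fun lam => ∑ t : Fin N, star (v t) * ∑ s : Fin N, (M lam).adjugate t s * u s := by
    funext lam
    simp [dotProduct, Matrix.mulVec, Pi.star_apply]
  rw [heq]
  refine Finset.analyticAt_fun_sum _ fun t _ => analyticAt_const.mul
    (Finset.analyticAt_fun_sum _ fun s _ => AnalyticAt.mul ?_ analyticAt_const)
  -- adjugate entry analytic
  have hadj : (fun lam => (M lam).adjugate t s)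
      = fun lam => ((M lam).updateRow s (Pi.single t 1)).det := by
    funext lam; rw [Matrix.adjugate_apply]
  rw [hadj]
  apply analyticAt_det
  intro i j
  by_cases his : i = s
  · subst his
    simp only [Matrix.updateRow_self]
    exact analyticAt_const
  · simp only [Matrix.updateRow_ne his]
    exact h i j


end S15

/-- For every `ε > 0`, every connected component of `Λ_ε(P)` has
non-empty interior. -/
theorem stmt15 {n m : ℕ} (P : Fin (m + 1) → Matrix (Fin (n + 1)) (Fin (n + 1)) ℂ)
    (hPm : (P (Fin.last m)).det ≠ 0)
    (w : Fin (m + 1) → ℝ) (hw : ∀ j, 0 ≤ w j) (hw0 : 0 < w 0) (ε : ℝ) (hε : 0 < ε) :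
    ∀ x ∈ {lam : ℂ | sMin (polyEval P lam) ≤ ε * wEval w (‖lam‖)},
      (interior (connectedComponentIn
        {lam : ℂ | sMin (polyEval P lam) ≤ ε * wEval w (‖lam‖)} x)).Nonempty := by
  classical
  intro x hx
  set Λ := {lam : ℂ | sMin (polyEval P lam) ≤ ε * wEval w (‖lam‖)} with hΛdef
  have hcont : Continuous fun lam => sMin (polyEval P lam) := S15.continuous_sMin_polyEval P
  have hcontw : Continuous fun lam : ℂ => ε * wEval w (‖lam‖) := by
    apply continuous_const.mul
    unfold wEval
    exact continuous_finset_sum _ fun j _ =>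
      continuous_const.mul (continuous_norm.pow _)
  have hopen : IsOpen {lam : ℂ | sMin (polyEval P lam) < ε * wEval w (‖lam‖)} :=
    isOpen_lt hcont hcontw
  -- Step: a strict point in the connected component gives nonempty interior.
  have step : ∀ z ∈ connectedComponentIn Λ x,
      sMin (polyEval P z) < ε * wEval w (‖z‖) →
      (interior (connectedComponentIn Λ x)).Nonempty := by
    intro z hzK hzs
    obtain ⟨r, hr, hball⟩ := Metric.isOpen_iff.mp hopen z hzs
    have hball' : Metric.ball z r ⊆ Λ := fun y hy => by
      have h := hball hy
      rw [Set.mem_setOf_eq] at h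
      exact le_of_lt h
    have hsub : Metric.ball z r ⊆ connectedComponentIn Λ x := by
      rw [connectedComponentIn_eq hzK]
      exact (convex_ball z r).isPreconnected.subset_connectedComponentIn
        (Metric.mem_ball_self hr) hball'
    exact ⟨z, interior_maximal hsub Metric.isOpen_ball (Metric.mem_ball_self hr)⟩
  by_cases hstr : sMin (polyEval P x) < ε * wEval w (‖x‖)
  · exact step x (mem_connectedComponentIn hx) hstr
  -- Equality case.
  have heq : sMin (polyEval P x) = ε * wEval w (‖x‖) := le_antisymm hx (not_lt.mp hstr)
  have hwx : 0 < wEval w (‖x‖) := S15.wEval_pos w hw hw0 (norm_nonneg x)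
  have hsx : 0 < sMin (polyEval P x) := by rw [heq]; positivity
  set A := polyEval P x with hA
  have hdet : A.det ≠ 0 := by
    intro h0
    obtain ⟨y, hy0, hAy⟩ := Matrix.exists_mulVec_eq_zero_iff.mpr h0
    have h1 := S15.sMin_mul_le A y
    rw [hAy] at h1
    have h2 : S15.enorm'' (0 : Fin (n+1) → ℂ) = 0 := by
      have : ((WithLp.equiv 2 (Fin (n+1) → ℂ)).symm (0 : Fin (n+1) → ℂ))
          = 0 := rfl
      rw [S15.enorm'', this, norm_zero]
    rw [h2] at h1
    nlinarith [S15.enorm'_pos hy0, hsx]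
  -- minimal singular vector and the dual vectors u, v
  obtain ⟨x0, hx0n, hx0A⟩ := S15.exists_min_vector A
  set s := sMin A with hs
  set u : Fin (n+1) → ℂ := ((s : ℂ))⁻¹ • (A *ᵥ x0) with hu
  have hun : S15.enorm'' u = 1 := by
    rw [hu, S15.enorm'_smul, hx0A, norm_inv, Complex.norm_real, Real.norm_eq_abs, abs_of_pos hsx]
    exact inv_mul_cancel₀ (ne_of_gt hsx)
  have hdotval : star x0 ⬝ᵥ (A⁻¹ *ᵥ u) = ((s : ℂ))⁻¹ := by
    rw [hu, Matrix.mulVec_smul, Matrix.mulVec_mulVec,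
      Matrix.nonsing_inv_mul A (isUnit_iff_ne_zero.mpr hdet), Matrix.one_mulVec,
      dotProduct_smul, smul_eq_mul, S15.star_dot_self, hx0n]
    norm_num
  -- the analytic minorant W of the weight function
  set d : ℂ := if x = 0 then 1 else (starRingEnd ℂ) x / (‖x‖ : ℂ) with hd
  have hd1 : ‖d‖ = 1 := by
    rw [hd]
    by_cases h : x = 0
    · simp [h]
    · have hax : ‖x‖ ≠ 0 := norm_ne_zero_iff.mpr h
      rw [if_neg h, norm_div, Complex.norm_conj, Complex.norm_real, Real.norm_eq_abs, abs_of_nonneg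
        (norm_nonneg x), div_self hax]
  have hd2 : x * d = ((‖x‖ : ℝ) : ℂ) := by
    rw [hd]
    by_cases h : x = 0
    · simp [h]
    · have hax : (‖x‖ : ℂ) ≠ 0 := by
        simpa using h
      rw [if_neg h, mul_div_assoc']
      rw [Complex.mul_conj, ← Complex.sq_norm]
      push_cast
      field_simp
  set W : ℂ → ℂ := fun lam => ∑ j : Fin (m+1), ((w j : ℝ) : ℂ) * (lam * d) ^ (j : ℕ) with hW
  have hWbound : ∀ lam, ‖W lam‖ ≤ wEval w (‖lam‖) := by
    intro lam
    rw [hW]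
    refine le_trans (norm_sum_le _ _) (le_of_eq ?_)
    unfold wEval
    refine Finset.sum_congr rfl fun j _ => ?_
    rw [norm_mul, norm_pow, norm_mul, hd1, mul_one, Complex.norm_real, Real.norm_eq_abs,
      abs_of_nonneg (hw j)]
  have hWx : W x = ((wEval w (‖x‖) : ℝ) : ℂ) := by
    rw [hW]
    unfold wEval
    push_cast
    exact Finset.sum_congr rfl fun j _ => by rw [hd2]
  -- the scalar analytic function f
  set f : ℂ → ℂ := fun lam => W lam * (((polyEval P lam).det)⁻¹
      * (star x0 ⬝ᵥ ((polyEval P lam).adjugate *ᵥ u))) with hf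
  -- master inequality
  have master : ∀ lam, sMin (polyEval P lam) * ‖f lam‖
      ≤ wEval w (‖lam‖) := by
    intro lam
    have h1 := S15.sMin_mul_abs_le (polyEval P lam) u x0 hun hx0n
    have h2 := hWbound lam
    have h3 := S15.sMin_nonneg (polyEval P lam)
    have h4 : ‖f lam‖ = ‖W lam‖
        * ‖((polyEval P lam).det)⁻¹
          * (star x0 ⬝ᵥ ((polyEval P lam).adjugate *ᵥ u))‖ := by
      rw [hf]; exact norm_mul _ _
    have h5 : (0:ℝ) ≤ ‖W lam‖ := norm_nonneg _
    have h6 : (0:ℝ) ≤ ‖((polyEval P lam).det)⁻¹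
          * (star x0 ⬝ᵥ ((polyEval P lam).adjugate *ᵥ u))‖ := norm_nonneg _
    calc sMin (polyEval P lam) * ‖f lam‖
        = ‖W lam‖ * (sMin (polyEval P lam) * ‖((polyEval P lam).det)⁻¹
          * (star x0 ⬝ᵥ ((polyEval P lam).adjugate *ᵥ u))‖) := by rw [h4]; ring
      _ ≤ ‖W lam‖ * 1 := by
          exact mul_le_mul_of_nonneg_left h1 h5
      _ ≤ wEval w (‖lam‖) := by rw [mul_one]; exact h2
  -- membership criteria
  have mem_of : ∀ lam, ε⁻¹ ≤ ‖f lam‖ → lam ∈ Λ := by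
    intro lam hlam
    have h1 := master lam
    have h3 := S15.sMin_nonneg (polyEval P lam)
    have h2 : sMin (polyEval P lam) * ε⁻¹ ≤ wEval w (‖lam‖) :=
      le_trans (mul_le_mul_of_nonneg_left hlam h3) h1
    show sMin (polyEval P lam) ≤ ε * wEval w (‖lam‖)
    calc sMin (polyEval P lam) = ε * (sMin (polyEval P lam) * ε⁻¹) := by field_simp
      _ ≤ ε * wEval w (‖lam‖) := mul_le_mul_of_nonneg_left h2 (le_of_lt hε)
  have strict_of : ∀ lam, ε⁻¹ < ‖f lam‖ →
      sMin (polyEval P lam) < ε * wEval w (‖lam‖) := by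
    intro lam hlam
    have h1 := master lam
    have h3 := S15.sMin_nonneg (polyEval P lam)
    rcases eq_or_lt_of_le h3 with h0 | h0
    · rw [← h0]
      exact mul_pos hε (S15.wEval_pos w hw hw0 (norm_nonneg lam))
    · have h2 : sMin (polyEval P lam) * ε⁻¹ < wEval w (‖lam‖) :=
        lt_of_lt_of_le (mul_lt_mul_of_pos_left hlam h0) h1
      calc sMin (polyEval P lam) = ε * (sMin (polyEval P lam) * ε⁻¹) := by field_simp
        _ < ε * wEval w (‖lam‖) := mul_lt_mul_of_pos_left h2 hε
  -- value of f at x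
  have hfx : f x = ((wEval w (‖x‖) : ℝ) : ℂ) * ((s : ℂ))⁻¹ := by
    show W x * (((polyEval P x).det)⁻¹ * (star x0 ⬝ᵥ ((polyEval P x).adjugate *ᵥ u))) = _
    rw [← hA, S15.inv_dot A x0 u, hdotval, hWx]
  have hfxabs : ‖f x‖ = ε⁻¹ := by
    rw [hfx, norm_mul, norm_inv, Complex.norm_real, Complex.norm_real, Real.norm_eq_abs, Real.norm_eq_abs,
      abs_of_pos hwx, abs_of_pos hsx, heq]
    field_simp
  have hfne : f x ≠ 0 := by
    intro h
    have h2 : (0:ℝ) < ε⁻¹ := inv_pos.mpr hε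
    rw [← hfxabs, h] at h2
    simp at h2
  -- analyticity of f at x
  have hentries : ∀ i j, AnalyticAt ℂ (fun lam => polyEval P lam i j) x :=
    S15.analyticAt_entry P x
  have hWa : AnalyticAt ℂ W x := by
    rw [hW]
    exact Finset.analyticAt_fun_sum _ fun j _ =>
      analyticAt_const.mul ((analyticAt_id.mul analyticAt_const).pow _)
  have hdeta : AnalyticAt ℂ (fun lam => (polyEval P lam).det) x := S15.analyticAt_det hentries
  have hdetx : (fun lam => (polyEval P lam).det) x ≠ 0 := by simpa using hdet
  have hfa : AnalyticAt ℂ f x := by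
    rw [hf]
    exact hWa.mul ((hdeta.inv hdetx).mul (S15.analyticAt_adj_dot u x0 hentries))
  -- dichotomy: locally constant or finite order
  by_cases hconst : ∀ᶠ lam in 𝓝 x, f lam = f x
  · obtain ⟨r, hr, hball⟩ := Metric.eventually_nhds_iff.mp hconst
    have hsub : Metric.ball x r ⊆ Λ := by
      intro y hy
      apply mem_of
      rw [hball (Metric.mem_ball.mp hy), hfxabs]
    have hsub2 : Metric.ball x r ⊆ connectedComponentIn Λ x :=
      (convex_ball x r).isPreconnected.subset_connectedComponentIn (Metric.mem_ball_self hr) hsub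
    exact ⟨x, interior_maximal hsub2 Metric.isOpen_ball (Metric.mem_ball_self hr)⟩
  · set g0 : ℂ → ℂ := fun lam => f lam - f x with hg0def
    have hg0 : AnalyticAt ℂ g0 x := hfa.sub analyticAt_const
    have horder : analyticOrderAt g0 x ≠ ⊤ := by
      intro hcon
      rw [analyticOrderAt_eq_top] at hcon
      apply hconst
      filter_upwards [hcon] with lam hl
      exact sub_eq_zero.mp hl
    obtain ⟨k, hk⟩ := WithTop.ne_top_iff_exists.mp horder
    obtain ⟨g, hg, hgx, hev⟩ := (hg0.analyticOrderAt_eq_natCast).mp hk.symm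
    have hk0 : k ≠ 0 := by
      intro h0
      subst h0
      have h1 := hev.self_of_nhds
      simp [hg0def] at h1
      exact hgx h1.symm
    have hkpos : 0 < k := Nat.pos_of_ne_zero hk0
    set ζ0 : ℂ := g x / f x with hζ0def
    have hζ0 : ζ0 ≠ 0 := div_ne_zero hgx hfne
    obtain ⟨c, hc⟩ := IsAlgClosed.exists_pow_nat_eq ((‖ζ0‖ : ℂ) / ζ0) hkpos
    have hck : c ^ k * ζ0 = ((‖ζ0‖ : ℝ) : ℂ) := by
      rw [hc]
      field_simp
    set ρ : ℝ := ‖ζ0‖ with hρdef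
    have hρpos : 0 < ρ := norm_pos_iff.mpr hζ0
    set q : ℂ → ℂ := fun lam => c ^ k * g lam / f x with hqdef
    have hqx : q x = (ρ : ℂ) := by
      show c ^ k * g x / f x = _
      rw [mul_div_assoc, ← hζ0def, hck]
    have hqcont : ContinuousAt (fun lam => (q lam).re) x := by
      apply Complex.continuous_re.continuousAt.comp
      exact (continuousAt_const.mul hg.continuousAt).div_const _
    have hre : ∀ᶠ lam in 𝓝 x, ρ/2 < (q lam).re := by
      have hlt : ρ/2 < (fun lam => (q lam).re) x := by
        show ρ/2 < (q x).re
        rw [hqx, Complex.ofReal_re]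
        linarith
      exact hqcont.eventually (eventually_gt_nhds hlt)
    obtain ⟨δ, hδpos, hδ⟩ := Metric.eventually_nhds_iff.mp (hev.and hre)
    set δ' : ℝ := δ/2 with hδ'def
    have hδ'pos : 0 < δ' := by positivity
    have hc1 : ‖c‖ = 1 := by
      have h1 : ‖c‖ ^ k = 1 := by
        rw [← norm_pow, hc, norm_div, Complex.norm_real, Real.norm_eq_abs,
          abs_of_nonneg (norm_nonneg ζ0)]
        exact div_self (ne_of_gt hρpos)
      by_contra hne
      rcases lt_or_gt_of_ne hne with hlt | hgt
      · have h2 := pow_lt_one₀ (norm_nonneg c) hlt hk0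
        rw [h1] at h2
        exact lt_irrefl _ h2
      · have h2 := one_lt_pow₀ hgt hk0
        rw [h1] at h2
        exact lt_irrefl _ h2
    set φ : ℝ → ℂ := fun t => x + (t : ℂ) * c with hφdef
    have hdist : ∀ t : ℝ, dist (φ t) x = |t| := by
      intro t
      show dist (x + (t:ℂ) * c) x = |t|
      rw [Complex.dist_eq]
      have : x + (t:ℂ) * c - x = (t:ℂ) * c := by ring
      rw [this, norm_mul, hc1, mul_one, Complex.norm_real, Real.norm_eq_abs]
    have habs : ∀ t : ℝ, 0 < t → t ≤ δ' → ε⁻¹ < ‖f (φ t)‖ := by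
      intro t ht0 ht1
      have hdt : dist (φ t) x < δ := by
        rw [hdist t, abs_of_pos ht0]
        rw [hδ'def] at ht1
        linarith
      obtain ⟨he, hq⟩ := hδ hdt
      have hφx : φ t - x = (t:ℂ) * c := by
        show x + (t:ℂ) * c - x = (t:ℂ) * c
        ring
      have e0 : f (φ t) - f x = ((t:ℂ) * c) ^ k * g (φ t) := by
        have e1 : g0 (φ t) = (φ t - x) ^ k • g (φ t) := he
        rw [hφx, smul_eq_mul] at e1
        exact e1
      have hfeq : f (φ t) = f x * (1 + ((t:ℂ)) ^ k * q (φ t)) := by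
        show f (φ t) = f x * (1 + ((t:ℂ)) ^ k * (c ^ k * g (φ t) / f x))
        field_simp
        linear_combination e0
      have habs2 : ‖f (φ t)‖ = ε⁻¹ * ‖1 + ((t:ℂ)) ^ k * q (φ t)‖ := by
        rw [hfeq, norm_mul, hfxabs]
      have hrepart : (1 + ((t:ℂ)) ^ k * q (φ t)).re = 1 + t ^ k * (q (φ t)).re := by
        rw [Complex.add_re, Complex.one_re, ← Complex.ofReal_pow, Complex.re_ofReal_mul]
      have htk : 0 < t ^ k := pow_pos ht0 k
      have hgt1 : 1 < ‖1 + ((t:ℂ)) ^ k * q (φ t)‖ := by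
        have h3 : 1 + t ^ k * (ρ/2) ≤ (1 + ((t:ℂ)) ^ k * q (φ t)).re := by
          rw [hrepart]
          have := mul_le_mul_of_nonneg_left (le_of_lt hq) (le_of_lt htk)
          linarith
        have h4 := Complex.re_le_norm (1 + ((t:ℂ)) ^ k * q (φ t))
        nlinarith [mul_pos htk (half_pos hρpos)]
      rw [habs2]
      have h5 : (0:ℝ) < ε⁻¹ := inv_pos.mpr hε
      nlinarith
    have hLsub : φ '' Set.Icc 0 δ' ⊆ Λ := by
      rintro z ⟨t, ⟨ht0, ht1⟩, rfl⟩
      rcases eq_or_lt_of_le ht0 with h | h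
      · have hzx : φ t = x := by
          rw [← h]
          show x + ((0:ℝ):ℂ) * c = x
          simp
        rw [hzx]
        exact hx
      · exact mem_of _ (le_of_lt (habs t h ht1))
    have hφcont : Continuous φ := by
      rw [hφdef]
      exact continuous_const.add (Complex.continuous_ofReal.mul continuous_const)
    have hLconn : IsPreconnected (φ '' Set.Icc 0 δ') :=
      isPreconnected_Icc.image _ hφcont.continuousOn
    have hxL : x ∈ φ '' Set.Icc 0 δ' := by
      refine ⟨0, ⟨le_refl _, le_of_lt hδ'pos⟩, ?_⟩
      show x + ((0:ℝ):ℂ) * c = x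
      simp
    have hLK : φ '' Set.Icc 0 δ' ⊆ connectedComponentIn Λ x :=
      hLconn.subset_connectedComponentIn hxL hLsub
    have hend : φ δ' ∈ connectedComponentIn Λ x := hLK ⟨δ', ⟨le_of_lt hδ'pos, le_refl _⟩, rfl⟩
    exact step (φ δ') hend (strict_of _ (habs δ' hδ'pos (le_refl _)))
end
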